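/- arXiv:1705.02711 — 10 statements merged into one kernel-verified Lean document; each statement's English description precedes it below -/
import Mathlib

section
/- Let ε, r ∈ (0,1) with ε + r < 1 and set C = r/((ε+r)·Γ(1−ε−r)). If a real sequence (a_t)_{t≥1} satisfies a_1 = 1 and a_{t+1} = (1 − (ε+r)/t)·a_t + ε/t for all t ≥ 1, then for every t ≥ 1, a_t = C·Γ(t−ε−r)/Γ(t) + ε/(ε+r). -/
open Real

theorem erws_sigma_sq_formula (ε r : ℝ) (hε : ε ∈ Set.Ioo (0:ℝ) 1)
    (hr : r ∈ Set.Ioo (0:ℝ) 1) (hsum : ε + r < 1)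
    (C : ℝ) (hC : C = r / ((ε + r) * Real.Gamma (1 - ε - r)))
    (a : ℕ → ℝ) (ha1 : a 1 = 1)
    (hrec : ∀ t : ℕ, 1 ≤ t → a (t + 1) = (1 - (ε + r) / t) * a t + ε / t) :
    ∀ t : ℕ, 1 ≤ t →
      a t = C * Real.Gamma ((t : ℝ) - ε - r) / Real.Gamma (t : ℝ) + ε / (ε + r) := by
  obtain ⟨hε0, hε1⟩ := hε
  obtain ⟨hr0, hr1⟩ := hr
  have hs0 : 0 < ε + r := by linarith
  have hΓ1 : Real.Gamma (1 - ε - r) ≠ 0 := (Real.Gamma_pos_of_pos (by linarith)).ne'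
  intro t ht
  induction t with
  | zero => omega
  | succ n ih =>
    rcases Nat.eq_or_lt_of_le ht with h1 | h1
    · -- n + 1 = 1
      have hn : n = 0 := by omega
      subst hn
      simp only [Nat.cast_one, ha1, Real.Gamma_one]
      rw [hC]
      have : (1:ℝ) - ε - r = 1 - ε - r := rfl
      field_simp
      simp [Real.Gamma_one]
      ring
    · have hn1 : 1 ≤ n := by omega
      have ihn := ih hn1
      have hnR : (0:ℝ) < n := by exact_mod_cast hn1
      have hnne : (n:ℝ) ≠ 0 := ne_of_gt hnR
      have hx : (n:ℝ) - ε - r ≠ 0 := by nlinarith [(Nat.one_le_cast (α := ℝ)).mpr hn1]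
      have hΓn : Real.Gamma (n:ℝ) ≠ 0 :=
        (Real.Gamma_pos_of_pos hnR).ne'
      have hΓx : Real.Gamma ((n:ℝ) - ε - r) ≠ 0 :=
        (Real.Gamma_pos_of_pos (by nlinarith [(Nat.one_le_cast (α := ℝ)).mpr hn1])).ne'
      have hrecn := hrec n hn1
      rw [hrecn, ihn]
      have hGa : Real.Gamma ((↑(n+1):ℝ) - ε - r) = ((n:ℝ) - ε - r) * Real.Gamma ((n:ℝ) - ε - r) := by
        have := Real.Gamma_add_one hx
        rw [Nat.cast_add, Nat.cast_one]
        convert this using 2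
        ring
      have hGn : Real.Gamma ((↑(n+1):ℝ)) = (n:ℝ) * Real.Gamma ((n:ℝ)) := by
        have := Real.Gamma_add_one hnne
        rw [Nat.cast_add, Nat.cast_one]
        exact this
      rw [hGa, hGn]
      field_simp
      ring
end

section
/- Let ε, r ∈ (0,1) with ε + r < 1, let γ ∈ (0,1) with γ ≠ 1/2 and 2γ ≠ 1−ε−r, and set C = r/((ε+r)·Γ(1−ε−r)) and D = −(1/Γ(2γ))·[ε/((ε+r)(1−2γ)) + r/((ε+r)(1−ε−r−2γ))]. If a real sequence (y_t)_{t≥1} satisfies y_1 = 1 and y_{t+1} = (1 + 2γ/t)·y_t + C·Γ(t+1−ε−r)/Γ(t+1) + ε/(ε+r) for all t ≥ 1, then for every t ≥ 1, y_t = ε·t/((1−2γ)(ε+r)) + (C/(1−ε−r−2γ))·Γ(t+1−ε−r)/Γ(t) + D·Γ(t+2γ)/Γ(t). -/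
open Real

theorem erws_second_moment_formula (ε r γ : ℝ) (hε : ε ∈ Set.Ioo (0:ℝ) 1)
    (hr : r ∈ Set.Ioo (0:ℝ) 1) (hsum : ε + r < 1)
    (hγ : γ ∈ Set.Ioo (0:ℝ) 1) (hγhalf : γ ≠ 1 / 2) (hγres : 2 * γ ≠ 1 - ε - r)
    (C D : ℝ) (hC : C = r / ((ε + r) * Real.Gamma (1 - ε - r)))
    (hD : D = -(1 / Real.Gamma (2 * γ)) *
      (ε / ((ε + r) * (1 - 2 * γ)) + r / ((ε + r) * (1 - ε - r - 2 * γ))))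
    (y : ℕ → ℝ) (hy1 : y 1 = 1)
    (hrec : ∀ t : ℕ, 1 ≤ t → y (t + 1) = (1 + 2 * γ / t) * y t
      + C * Real.Gamma ((t : ℝ) + 1 - ε - r) / Real.Gamma ((t : ℝ) + 1) + ε / (ε + r)) :
    ∀ t : ℕ, 1 ≤ t →
      y t = ε * t / ((1 - 2 * γ) * (ε + r))
        + (C / (1 - ε - r - 2 * γ)) * Real.Gamma ((t : ℝ) + 1 - ε - r) / Real.Gamma (t : ℝ)
        + D * (Real.Gamma ((t : ℝ) + 2 * γ) / Real.Gamma (t : ℝ)) := by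
  obtain ⟨hε0, hε1⟩ := hε
  obtain ⟨hr0, hr1⟩ := hr
  obtain ⟨hγ0, hγ1⟩ := hγ
  have hεr : ε + r ≠ 0 := by positivity
  have h2γ : (1 : ℝ) - 2 * γ ≠ 0 := by
    intro h; apply hγhalf; linarith
  have hres : (1 : ℝ) - ε - r - 2 * γ ≠ 0 := by
    intro h; apply hγres; linarith
  have hGa : Real.Gamma (1 - ε - r) ≠ 0 :=
    ne_of_gt (Real.Gamma_pos_of_pos (by linarith))
  have hGg : Real.Gamma (2 * γ) ≠ 0 :=
    ne_of_gt (Real.Gamma_pos_of_pos (by linarith))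
  intro t ht
  induction t with
  | zero => omega
  | succ n ih =>
    rcases Nat.eq_or_lt_of_le ht with h1 | h1
    · -- base case t = 1
      have hn : n = 0 := by omega
      subst hn
      rw [hy1]
      push_cast
      have e1 : ((1:ℝ) + 1 - ε - r) = (1 - ε - r) + 1 := by ring
      have e2 : ((1:ℝ) + 2 * γ) = (2 * γ) + 1 := by ring
      rw [e1, e2, Real.Gamma_add_one (by linarith), Real.Gamma_add_one (by linarith),
        Real.Gamma_one, hC, hD]
      field_simp
      ring
    · -- step: n ≥ 1
      have hn : 1 ≤ n := by omega
      have ih' := ih hn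
      rw [hrec n hn, ih']
      have hnR : (0:ℝ) < (n : ℝ) := by exact_mod_cast hn
      have hGn : Real.Gamma (n : ℝ) ≠ 0 := ne_of_gt (Real.Gamma_pos_of_pos hnR)
      have hnne : (n : ℝ) ≠ 0 := ne_of_gt hnR
      push_cast
      have hn1 : (1:ℝ) ≤ (n:ℝ) := by exact_mod_cast hn
      have e1 : ((n:ℝ) + 1 + 1 - ε - r) = ((n:ℝ) + 1 - ε - r) + 1 := by ring
      have e2 : ((n:ℝ) + 1 + 2 * γ) = ((n:ℝ) + 2 * γ) + 1 := by ring
      have g1 : Real.Gamma ((n:ℝ) + 1) = (n:ℝ) * Real.Gamma (n:ℝ) :=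
        Real.Gamma_add_one hnne
      have g2 : Real.Gamma (((n:ℝ) + 1 - ε - r) + 1)
          = ((n:ℝ) + 1 - ε - r) * Real.Gamma ((n:ℝ) + 1 - ε - r) :=
        Real.Gamma_add_one (by nlinarith)
      have g3 : Real.Gamma (((n:ℝ) + 2 * γ) + 1)
          = ((n:ℝ) + 2 * γ) * Real.Gamma ((n:ℝ) + 2 * γ) :=
        Real.Gamma_add_one (by nlinarith)
      rw [e1, e2, g2, g3, g1]
      field_simp
      ring
end

section
/- Let ε, r ∈ (0,1) with ε + r < 1, let γ ∈ (0,1/2) with 2γ ≠ 1−ε−r, and set C = r/((ε+r)·Γ(1−ε−r)). If a real sequence (y_t)_{t≥1} satisfies y_1 = 1 and y_{t+1} = (1 + 2γ/t)·y_t + C·Γ(t+1−ε−r)/Γ(t+1) + ε/(ε+r) for all t ≥ 1, then lim_{t→∞} y_t / t = ε/((1−2γ)(ε+r)). -/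
open Real Filter

private lemma harmonic_tail_tendsto (N : ℕ) :
    Tendsto (fun n => ∑ k ∈ Finset.range n, (1:ℝ) / ((N:ℝ) + k + 1)) atTop atTop := by
  have h1 : Tendsto (fun n => (1/((N:ℝ)+1)) * ∑ k ∈ Finset.range n, (1:ℝ)/(k+1)) atTop atTop :=
    (Real.tendsto_sum_range_one_div_nat_succ_atTop).const_mul_atTop (by positivity)
  refine tendsto_atTop_mono ?_ h1
  intro n
  rw [Finset.mul_sum]
  apply Finset.sum_le_sum
  intro k _
  rw [div_mul_div_comm, one_mul]
  apply one_div_le_one_div_of_le (by positivity)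
  nlinarith [Nat.cast_nonneg (α := ℝ) N, Nat.cast_nonneg (α := ℝ) k]

private lemma tendsto_zero_of_decay (c : ℝ) (hc : 0 < c) (N : ℕ) (w : ℕ → ℝ)
    (hw0 : ∀ t, N ≤ t → 0 ≤ w t)
    (hwrec : ∀ t, N ≤ t → w (t + 1) ≤ (1 - c / ((t:ℝ) + 1)) * w t) :
    Tendsto w atTop (nhds 0) := by
  have hdec : ∀ t, N ≤ t → w (t+1) ≤ w t := by
    intro t ht
    have h1 := hwrec t ht
    have h0 := hw0 t ht
    have h2 : (0:ℝ) ≤ c / ((t:ℝ)+1) := by positivity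
    nlinarith
  have hmono : ∀ s t, N ≤ s → s ≤ t → w t ≤ w s := by
    intro s t hs hst
    induction t, hst using Nat.le_induction with
    | base => exact le_rfl
    | succ n hn ih => exact le_trans (hdec n (le_trans hs hn)) ih
  have hsmall : ∀ η : ℝ, 0 < η → ∃ T, N ≤ T ∧ w T < η := by
    intro η hη
    by_contra hcon
    push_neg at hcon
    have tel : ∀ n : ℕ, w (N + n) ≤ w N - c * η * ∑ k ∈ Finset.range n, (1:ℝ)/((N:ℝ)+k+1) := by
      intro n
      induction n with
      | zero => simp
      | succ n ih =>
        have hNn : N ≤ N + n := Nat.le_add_right _ _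
        have hr2 := hwrec (N+n) hNn
        have hηw := hcon (N+n) hNn
        have hpos : (0:ℝ) < ((N+n : ℕ):ℝ) + 1 := by positivity
        have hstep : w (N + n + 1) ≤ w (N+n) - c * η / (((N+n:ℕ):ℝ)+1) := by
          have h1 : c / (((N+n:ℕ):ℝ)+1) * η ≤ c / (((N+n:ℕ):ℝ)+1) * w (N+n) :=
            mul_le_mul_of_nonneg_left hηw (by positivity)
          have h2 : c / (((N+n:ℕ):ℝ)+1) * η = c * η / (((N+n:ℕ):ℝ)+1) := by ring
          nlinarith
        have hcast : (((N+n:ℕ)):ℝ) = (N:ℝ) + n := by push_cast; ring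
        rw [Finset.sum_range_succ, show N + (n+1) = (N+n)+1 from rfl]
        rw [hcast] at hstep
        calc w ((N+n)+1) ≤ w (N+n) - c*η/((N:ℝ)+n+1) := hstep
          _ ≤ w N - c * η * ∑ k ∈ Finset.range n, (1:ℝ)/((N:ℝ)+k+1) - c*η/((N:ℝ)+n+1) := by linarith
          _ = w N - c * η * (∑ k ∈ Finset.range n, (1:ℝ)/((N:ℝ)+k+1) + 1/((N:ℝ)+n+1)) := by ring
    have hdiv : Tendsto (fun n => w N - c * η * ∑ k ∈ Finset.range n, (1:ℝ)/((N:ℝ)+k+1)) atTop atBot := by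
      have h2 : Tendsto (fun n => c * η * ∑ k ∈ Finset.range n, (1:ℝ)/((N:ℝ)+k+1)) atTop atTop :=
        (harmonic_tail_tendsto N).const_mul_atTop (by positivity)
      have h3 : Tendsto (fun n => -(c * η * ∑ k ∈ Finset.range n, (1:ℝ)/((N:ℝ)+k+1))) atTop atBot :=
        tendsto_neg_atTop_atBot.comp h2
      simp only [sub_eq_add_neg]
      exact tendsto_atBot_add_const_left _ (w N) h3
    obtain ⟨n, hn⟩ := (hdiv.eventually (eventually_lt_atBot (0:ℝ))).exists
    exact absurd (lt_of_le_of_lt (tel n) hn) (not_lt.mpr (hw0 _ (Nat.le_add_right _ _)))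
  rw [Metric.tendsto_atTop]
  intro η hη
  obtain ⟨T, hTN, hT⟩ := hsmall η hη
  exact ⟨T, fun t ht => by
    rw [Real.dist_eq, sub_zero, abs_of_nonneg (hw0 t (hTN.trans ht))]
    exact lt_of_le_of_lt (hmono T t hTN ht) hT⟩

theorem erws_diffusivity_subcritical (ε r γ : ℝ) (hε : ε ∈ Set.Ioo (0:ℝ) 1)
    (hr : r ∈ Set.Ioo (0:ℝ) 1) (hsum : ε + r < 1)
    (hγ : γ ∈ Set.Ioo (0:ℝ) (1 / 2)) (hγres : 2 * γ ≠ 1 - ε - r)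
    (C : ℝ) (hC : C = r / ((ε + r) * Real.Gamma (1 - ε - r)))
    (y : ℕ → ℝ) (hy1 : y 1 = 1)
    (hrec : ∀ t : ℕ, 1 ≤ t → y (t + 1) = (1 + 2 * γ / t) * y t
      + C * Real.Gamma ((t : ℝ) + 1 - ε - r) / Real.Gamma ((t : ℝ) + 1) + ε / (ε + r)) :
    Tendsto (fun t : ℕ => y t / t) atTop (nhds (ε / ((1 - 2 * γ) * (ε + r)))) := by
  obtain ⟨hε0, hε1⟩ := hε
  obtain ⟨hr0, hr1⟩ := hr
  obtain ⟨hγ0, hγ1⟩ := hγ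
  have hc : (0:ℝ) < 1 - 2*γ := by linarith
  have hεr : (0:ℝ) < ε + r := by linarith
  set L := ε / ((1 - 2 * γ) * (ε + r)) with hLdef
  have hLeq : (1 - 2*γ) * L = ε / (ε + r) := by
    rw [hLdef]; field_simp
  set h : ℕ → ℝ := fun t => C * Real.Gamma ((t:ℝ) + 1 - ε - r) / Real.Gamma ((t:ℝ) + 1)
    with hhdef
  have hC0 : 0 < C := by
    rw [hC]; exact div_pos hr0 (mul_pos hεr (Real.Gamma_pos_of_pos (by linarith)))
  have hh0 : ∀ t : ℕ, 1 ≤ t → 0 ≤ h t := by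
    intro t ht
    have ht1 : (1:ℝ) ≤ (t:ℝ) := by exact_mod_cast ht
    have h1 : (0:ℝ) < (t:ℝ) + 1 - ε - r := by linarith
    have h2 : (0:ℝ) < (t:ℝ) + 1 := by linarith
    exact le_of_lt (div_pos (mul_pos hC0 (Real.Gamma_pos_of_pos h1)) (Real.Gamma_pos_of_pos h2))
  have hhrec : ∀ t : ℕ, 1 ≤ t → h (t+1) = (1 - (ε+r)/((t:ℝ)+1)) * h t := by
    intro t ht
    have ht1 : (1:ℝ) ≤ (t:ℝ) := by exact_mod_cast ht
    have hne1 : ((t:ℝ) + 1 - ε - r) ≠ 0 := by linarith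
    have hne2 : ((t:ℝ) + 1) ≠ 0 := by linarith
    have e1 : ((t+1 : ℕ):ℝ) + 1 - ε - r = ((t:ℝ) + 1 - ε - r) + 1 := by push_cast; ring
    have e2 : ((t+1 : ℕ):ℝ) + 1 = ((t:ℝ) + 1) + 1 := by push_cast; ring
    have g1 : Real.Gamma (((t+1:ℕ):ℝ) + 1 - ε - r) = ((t:ℝ)+1-ε-r) * Real.Gamma ((t:ℝ)+1-ε-r) := by
      rw [e1, Real.Gamma_add_one hne1]
    have g2 : Real.Gamma (((t+1:ℕ):ℝ) + 1) = ((t:ℝ)+1) * Real.Gamma ((t:ℝ)+1) := by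
      rw [e2, Real.Gamma_add_one hne2]
    have hg2 : Real.Gamma ((t:ℝ)+1) ≠ 0 := (Real.Gamma_pos_of_pos (by linarith)).ne'
    simp only [hhdef]
    rw [g1, g2]
    field_simp
    ring
  have hhtend : Tendsto h atTop (nhds 0) := by
    refine tendsto_zero_of_decay (ε+r) hεr 1 h hh0 ?_
    intro t ht; exact le_of_eq (hhrec t ht)
  set v : ℕ → ℝ := fun t => y t / t - L with hvdef
  have hvrec : ∀ t : ℕ, 1 ≤ t →
      v (t+1) = (1 - (1 - 2*γ)/((t:ℝ)+1)) * v t + h t / ((t:ℝ)+1) := by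
    intro t ht
    have ht1 : (1:ℝ) ≤ (t:ℝ) := by exact_mod_cast ht
    have htne : (t:ℝ) ≠ 0 := by linarith
    have ht1ne : (t:ℝ) + 1 ≠ 0 := by linarith
    have hy := hrec t ht
    have hht : h t = C * Real.Gamma ((t:ℝ) + 1 - ε - r) / Real.Gamma ((t:ℝ) + 1) := rfl
    have hLε : ε / (ε + r) = (1 - 2*γ) * L := hLeq.symm
    simp only [hvdef, Nat.cast_add, Nat.cast_one, hy, hht, hLε]
    field_simp
    ring
  have hvtend : Tendsto v atTop (nhds 0) := by
    rw [Metric.tendsto_atTop]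
    intro η hη
    set c := 1 - 2*γ with hcdef
    have hc1 : c < 1 := by rw [hcdef]; linarith
    set δ := η * c / (1 + c) with hδdef
    have hδ0 : 0 < δ := by rw [hδdef]; positivity
    have hδη : δ / c + δ = η := by rw [hδdef]; field_simp
    obtain ⟨N₁, hN₁⟩ := Metric.tendsto_atTop.mp hhtend δ hδ0
    set N := max N₁ 1 with hNdef
    set w : ℕ → ℝ := fun t => max (|v t| - δ/c) 0 with hwdef
    have hw0 : ∀ t, N ≤ t → 0 ≤ w t := fun t _ => le_max_right _ _
    have hwrec : ∀ t, N ≤ t → w (t+1) ≤ (1 - c/((t:ℝ)+1)) * w t := by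
      intro t ht
      have htN1 : N₁ ≤ t := le_trans (le_max_left _ _) ht
      have ht1n : 1 ≤ t := le_trans (le_max_right _ _) ht
      have ht1 : (1:ℝ) ≤ (t:ℝ) := by exact_mod_cast ht1n
      have hA0 : (0:ℝ) ≤ 1 - c/((t:ℝ)+1) := by
        have h1 : c/((t:ℝ)+1) ≤ c := by
          rw [div_le_iff₀ (by linarith : (0:ℝ) < (t:ℝ)+1)]
          nlinarith
        linarith
      have hhd : |h t| ≤ δ := by
        have := hN₁ t htN1
        rw [Real.dist_eq, sub_zero] at this
        exact this.le
      have habs : |v (t+1)| ≤ (1 - c/((t:ℝ)+1)) * |v t| + δ/((t:ℝ)+1) := by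
        rw [hvrec t ht1n]
        calc |(1 - c/((t:ℝ)+1)) * v t + h t / ((t:ℝ)+1)|
            ≤ |(1 - c/((t:ℝ)+1)) * v t| + |h t / ((t:ℝ)+1)| := abs_add_le _ _
          _ = (1 - c/((t:ℝ)+1)) * |v t| + |h t| / ((t:ℝ)+1) := by
              rw [abs_mul, abs_div, abs_of_nonneg hA0, abs_of_nonneg (by linarith : (0:ℝ) ≤ (t:ℝ)+1)]
          _ ≤ (1 - c/((t:ℝ)+1)) * |v t| + δ / ((t:ℝ)+1) := by gcongr
      apply max_le
      · have h1 : |v t| - δ/c ≤ w t := le_max_left _ _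
        have h2 : (1 - c/((t:ℝ)+1)) * (|v t| - δ/c) ≤ (1 - c/((t:ℝ)+1)) * w t :=
          mul_le_mul_of_nonneg_left h1 hA0
        have hkey : |v (t+1)| - δ/c ≤ (1 - c/((t:ℝ)+1)) * (|v t| - δ/c) := by
          have hct : c ≠ 0 := hc.ne'
          have ht1ne : (t:ℝ) + 1 ≠ 0 := by linarith
          have hid : (1 - c/((t:ℝ)+1)) * (δ/c) = δ/c - δ/((t:ℝ)+1) := by
            field_simp
          nlinarith [habs]
        linarith
      · exact mul_nonneg hA0 (le_max_right _ _)
    have hwt : Tendsto w atTop (nhds 0) := tendsto_zero_of_decay c hc N w hw0 hwrec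
    obtain ⟨T, hT⟩ := Metric.tendsto_atTop.mp hwt δ hδ0
    refine ⟨max T N, fun t ht => ?_⟩
    have h1 := hT t (le_trans (le_max_left _ _) ht)
    rw [Real.dist_eq, sub_zero, abs_of_nonneg (hw0 t (le_trans (le_max_right _ _) ht))] at h1
    have h2 : |v t| - δ/c ≤ w t := le_max_left _ _
    rw [Real.dist_eq, sub_zero]
    linarith
  have : Tendsto (fun t => v t + L) atTop (nhds (0 + L)) := hvtend.add tendsto_const_nhds
  rw [zero_add] at this
  have heq : (fun t : ℕ => y t / t) = fun t => v t + L := by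
    funext t; simp [hvdef]
  rw [heq]
  exact this
end

section
/- Let ε, r ∈ (0,1) with ε + r < 1, let γ ∈ (1/2,1), and set C = r/((ε+r)·Γ(1−ε−r)) and D = −(1/Γ(2γ))·[ε/((ε+r)(1−2γ)) + r/((ε+r)(1−ε−r−2γ))]. If a real sequence (y_t)_{t≥1} satisfies y_1 = 1 and y_{t+1} = (1 + 2γ/t)·y_t + C·Γ(t+1−ε−r)/Γ(t+1) + ε/(ε+r) for all t ≥ 1, then lim_{t→∞} y_t / t^{2γ} = D. -/
open Real Filter

lemma wendel_upper {a x : ℝ} (ha0 : 0 < a) (ha1 : a < 1) (hx : 0 < x) :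
    Real.Gamma (x + a) ≤ Real.Gamma x * x ^ a := by
  have hGx := Real.Gamma_pos_of_pos hx
  have h := Real.Gamma_mul_add_mul_le_rpow_Gamma_mul_rpow_Gamma hx
    (by linarith : (0:ℝ) < x + 1) (by linarith : 0 < 1 - a) ha0 (by ring)
  rw [show (1 - a) * x + a * (x + 1) = x + a by ring,
    Real.Gamma_add_one hx.ne', Real.mul_rpow hx.le hGx.le] at h
  calc Real.Gamma (x + a) ≤ Real.Gamma x ^ (1 - a) * (x ^ a * Real.Gamma x ^ a) := h
    _ = Real.Gamma x * x ^ a := by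
        rw [show Real.Gamma x ^ (1-a) * (x ^ a * Real.Gamma x ^ a)
            = (Real.Gamma x ^ (1-a) * Real.Gamma x ^ a) * x ^ a by ring,
          ← Real.rpow_add hGx, sub_add_cancel, Real.rpow_one]

lemma wendel_lower {a x : ℝ} (ha0 : 0 < a) (ha1 : a < 1) (hx : 0 < x) :
    x * Real.Gamma x ≤ Real.Gamma (x + a) * (x + a) ^ (1 - a) := by
  have hxa : 0 < x + a := by linarith
  have hG := Real.Gamma_pos_of_pos hxa
  have h := Real.Gamma_mul_add_mul_le_rpow_Gamma_mul_rpow_Gamma hxa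
    (by linarith : (0:ℝ) < x + a + 1) ha0 (by linarith : 0 < 1 - a) (by ring)
  rw [show a * (x + a) + (1 - a) * (x + a + 1) = x + 1 by ring,
    Real.Gamma_add_one hx.ne', Real.Gamma_add_one hxa.ne',
    Real.mul_rpow hxa.le hG.le] at h
  calc x * Real.Gamma x ≤ Real.Gamma (x+a) ^ a * ((x+a) ^ (1-a) * Real.Gamma (x+a) ^ (1-a)) := h
    _ = Real.Gamma (x + a) * (x + a) ^ (1 - a) := by
        rw [show Real.Gamma (x+a) ^ a * ((x+a) ^ (1-a) * Real.Gamma (x+a) ^ (1-a))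
            = (Real.Gamma (x+a) ^ a * Real.Gamma (x+a) ^ (1-a)) * (x+a) ^ (1-a) by ring,
          ← Real.rpow_add hG, add_sub_cancel, Real.rpow_one]

lemma gamma_ratio_tendsto {a : ℝ} (ha0 : 0 < a) (ha1 : a < 1) :
    Tendsto (fun x : ℝ => Real.Gamma (x + a) / (Real.Gamma x * x ^ a)) atTop (nhds 1) := by
  have hlow : Tendsto (fun x : ℝ => (x / (x + a)) ^ (1 - a)) atTop (nhds 1) := by
    have h1 : Tendsto (fun x : ℝ => x / (x + a)) atTop (nhds 1) := by
      have h0 : Tendsto (fun x : ℝ => a / (x + a)) atTop (nhds 0) :=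
        tendsto_const_nhds.div_atTop (tendsto_atTop_add_const_right _ a tendsto_id)
      have h2 : Tendsto (fun x : ℝ => 1 - a / (x + a)) atTop (nhds 1) := by
        simpa using (tendsto_const_nhds (x := (1:ℝ))).sub h0
      refine h2.congr' ?_
      filter_upwards [eventually_gt_atTop (0:ℝ)] with x hx
      have : x + a ≠ 0 := by positivity
      field_simp
      ring
    have hc : ContinuousAt (fun u : ℝ => u ^ (1 - a)) 1 :=
      Real.continuousAt_rpow_const 1 (1 - a) (Or.inl one_ne_zero)
    have := hc.tendsto.comp h1
    simpa [Real.one_rpow, Function.comp_def] using this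
  refine tendsto_of_tendsto_of_tendsto_of_le_of_le' hlow tendsto_const_nhds ?_ ?_
  · filter_upwards [eventually_gt_atTop (0:ℝ)] with x hx
    have hxa : 0 < x + a := by linarith
    have hGx := Real.Gamma_pos_of_pos hx
    have hP : 0 < Real.Gamma x * x ^ a := by positivity
    have hQ : 0 < (x + a) ^ (1 - a) := Real.rpow_pos_of_pos hxa _
    rw [Real.div_rpow hx.le hxa.le, div_le_div_iff₀ hQ hP]
    calc x ^ (1-a) * (Real.Gamma x * x ^ a)
        = (x ^ (1-a) * x ^ a) * Real.Gamma x := by ring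
      _ = x * Real.Gamma x := by rw [← Real.rpow_add hx, sub_add_cancel, Real.rpow_one]
      _ ≤ Real.Gamma (x + a) * (x + a) ^ (1 - a) := wendel_lower ha0 ha1 hx
  · filter_upwards [eventually_gt_atTop (0:ℝ)] with x hx
    have hGx := Real.Gamma_pos_of_pos hx
    have hP : 0 < Real.Gamma x * x ^ a := by positivity
    rw [div_le_one hP]
    exact wendel_upper ha0 ha1 hx
set_option maxHeartbeats 1000000 in
theorem erws_superdiffusive_coefficient (ε r γ : ℝ) (hε : ε ∈ Set.Ioo (0:ℝ) 1)
    (hr : r ∈ Set.Ioo (0:ℝ) 1) (hsum : ε + r < 1)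
    (hγ : γ ∈ Set.Ioo (1/2 : ℝ) 1)
    (C D : ℝ) (hC : C = r / ((ε + r) * Real.Gamma (1 - ε - r)))
    (hD : D = -(1 / Real.Gamma (2 * γ)) *
      (ε / ((ε + r) * (1 - 2 * γ)) + r / ((ε + r) * (1 - ε - r - 2 * γ))))
    (y : ℕ → ℝ) (hy1 : y 1 = 1)
    (hrec : ∀ t : ℕ, 1 ≤ t → y (t + 1) = (1 + 2 * γ / t) * y t
      + C * Real.Gamma ((t : ℝ) + 1 - ε - r) / Real.Gamma ((t : ℝ) + 1) + ε / (ε + r)) :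
    Tendsto (fun t : ℕ => y t / (t : ℝ) ^ (2 * γ)) atTop (nhds D) := by
  obtain ⟨hε0, hε1⟩ := hε
  obtain ⟨hr0, hr1⟩ := hr
  obtain ⟨hγ0, hγ1⟩ := hγ
  have hεr : 0 < ε + r := by linarith
  have h2γ : 1 < 2 * γ := by linarith
  have h2γ2 : 2 * γ < 2 := by linarith
  have ha0 : 0 < 1 - ε - r := by linarith
  have ha1 : 1 - ε - r < 1 := by linarith
  have hne1 : (1 : ℝ) - 2 * γ ≠ 0 := by linarith
  have hne2 : (1 : ℝ) - ε - r - 2 * γ ≠ 0 := by linarith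
  have hG1 : 0 < Real.Gamma (2 * γ) := Real.Gamma_pos_of_pos (by linarith)
  have hG2 : 0 < Real.Gamma (1 - ε - r) := Real.Gamma_pos_of_pos ha0
  set K2 : ℝ := C / (1 - ε - r - 2 * γ) with hK2
  set K3 : ℝ := ε / ((ε + r) * (1 - 2 * γ)) with hK3
  have hCK : C = K2 * (1 - ε - r - 2 * γ) := by
    rw [hK2]; field_simp
  have hK3' : ε / (ε + r) = K3 * (1 - 2 * γ) := by
    rw [hK3]; field_simp
  -- closed form
  have hclosed : ∀ t : ℕ, 1 ≤ t →
      y t = D * Real.Gamma ((t : ℝ) + 2 * γ) / Real.Gamma (t : ℝ)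
        + K2 * Real.Gamma ((t : ℝ) + 1 - ε - r) / Real.Gamma (t : ℝ) + K3 * t := by
    intro t ht
    induction t with
    | zero => omega
    | succ n ih =>
      rcases Nat.lt_or_ge 1 (n + 1) with h1 | h1
      · -- inductive step, n ≥ 1
        have hn : 1 ≤ n := by omega
        have ihn := ih hn
        have hnR : (1:ℝ) ≤ (n:ℝ) := by exact_mod_cast hn
        have hn0 : (0:ℝ) < (n:ℝ) := by linarith
        rw [hrec n hn, ihn]
        push_cast
        have g1 : Real.Gamma ((n:ℝ) + 1 + 2*γ) = ((n:ℝ) + 2*γ) * Real.Gamma ((n:ℝ) + 2*γ) := by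
          rw [show (n:ℝ) + 1 + 2*γ = ((n:ℝ) + 2*γ) + 1 by ring,
            Real.Gamma_add_one (by positivity : ((n:ℝ) + 2*γ) ≠ 0)]
        have g2 : Real.Gamma ((n:ℝ) + 1 + 1 - ε - r)
            = ((n:ℝ) + 1 - ε - r) * Real.Gamma ((n:ℝ) + 1 - ε - r) := by
          rw [show (n:ℝ) + 1 + 1 - ε - r = ((n:ℝ) + 1 - ε - r) + 1 by ring,
            Real.Gamma_add_one (by nlinarith : ((n:ℝ) + 1 - ε - r) ≠ 0)]
        have g3 : Real.Gamma ((n:ℝ) + 1) = (n:ℝ) * Real.Gamma (n:ℝ) :=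
          Real.Gamma_add_one (ne_of_gt hn0)
        have hGn : Real.Gamma (n:ℝ) ≠ 0 := ne_of_gt (Real.Gamma_pos_of_pos hn0)
        rw [g1, g2, g3, hCK, hK3']
        field_simp
        ring
      · -- base case n = 0
        have hn : n = 0 := by omega
        subst hn
        norm_num [hy1, Real.Gamma_one]
        rw [show (1:ℝ) + 2*γ = (2*γ) + 1 by ring,
          show (2:ℝ) - ε - r = (1 - ε - r) + 1 by ring,
          Real.Gamma_add_one (by linarith : (2*γ:ℝ) ≠ 0),
          Real.Gamma_add_one (ne_of_gt ha0), hD, hK2, hK3, hC]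
        field_simp [hεr.ne', hne1, hne2, hG1.ne', hG2.ne']
        ring
  -- limits
  have hb0 : (0:ℝ) < 2*γ - 1 := by linarith
  have hb1 : 2*γ - 1 < 1 := by linarith
  have natbase : Tendsto (fun n : ℕ =>
      Real.Gamma ((n:ℝ) + (2*γ - 1)) / (Real.Gamma (n:ℝ) * (n:ℝ) ^ (2*γ - 1)))
      atTop (nhds 1) :=
    (gamma_ratio_tendsto hb0 hb1).comp tendsto_natCast_atTop_atTop
  have natbase2 : Tendsto (fun n : ℕ =>
      Real.Gamma ((n:ℝ) + (1 - ε - r)) / (Real.Gamma (n:ℝ) * (n:ℝ) ^ (1 - ε - r)))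
      atTop (nhds 1) :=
    (gamma_ratio_tendsto ha0 ha1).comp tendsto_natCast_atTop_atTop
  have hshift : Tendsto (fun n : ℕ => ((n:ℝ) + (2*γ - 1)) / (n:ℝ)) atTop (nhds 1) := by
    have h0 : Tendsto (fun n : ℕ => (2*γ - 1) / (n:ℝ)) atTop (nhds 0) :=
      tendsto_const_nhds.div_atTop tendsto_natCast_atTop_atTop
    have h2 : Tendsto (fun n : ℕ => 1 + (2*γ - 1) / (n:ℝ)) atTop (nhds 1) := by
      simpa using (tendsto_const_nhds (x := (1:ℝ))).add h0
    refine h2.congr' ?_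
    filter_upwards [eventually_ge_atTop 1] with n hn
    have hn0 : (0:ℝ) < (n:ℝ) := by exact_mod_cast Nat.pos_of_ne_zero (by omega)
    field_simp
  have N1 : Tendsto (fun n : ℕ =>
      Real.Gamma ((n:ℝ) + 2*γ) / (Real.Gamma (n:ℝ) * (n:ℝ) ^ (2*γ)))
      atTop (nhds 1) := by
    have hmul := hshift.mul natbase
    rw [one_mul] at hmul
    refine hmul.congr' ?_
    filter_upwards [eventually_ge_atTop 1] with n hn
    have hn0 : (0:ℝ) < (n:ℝ) := by exact_mod_cast Nat.pos_of_ne_zero (by omega)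
    have hg : Real.Gamma ((n:ℝ) + 2*γ)
        = ((n:ℝ) + (2*γ - 1)) * Real.Gamma ((n:ℝ) + (2*γ - 1)) := by
      rw [show (n:ℝ) + 2*γ = ((n:ℝ) + (2*γ - 1)) + 1 by ring,
        Real.Gamma_add_one (by positivity : ((n:ℝ) + (2*γ - 1)) ≠ 0)]
    have hp : (n:ℝ) ^ (2*γ) = (n:ℝ) ^ (2*γ - 1) * (n:ℝ) := by
      have h := Real.rpow_add_one hn0.ne' (2*γ - 1)
      rw [sub_add_cancel] at h
      exact h
    have hGn : Real.Gamma (n:ℝ) ≠ 0 := ne_of_gt (Real.Gamma_pos_of_pos hn0)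
    have hq : ((n:ℝ) ^ (2*γ - 1)) ≠ 0 := ne_of_gt (Real.rpow_pos_of_pos hn0 _)
    rw [hg, hp]
    field_simp
  have N2 : Tendsto (fun n : ℕ =>
      Real.Gamma ((n:ℝ) + 1 - ε - r) / (Real.Gamma (n:ℝ) * (n:ℝ) ^ (2*γ)))
      atTop (nhds 0) := by
    have hpow : Tendsto (fun n : ℕ => ((n:ℝ)) ^ (-(2*γ - (1 - ε - r)))) atTop (nhds 0) :=
      (tendsto_rpow_neg_atTop (by linarith)).comp tendsto_natCast_atTop_atTop
    have hmul := natbase2.mul hpow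
    rw [one_mul] at hmul
    refine hmul.congr' ?_
    filter_upwards [eventually_ge_atTop 1] with n hn
    have hn0 : (0:ℝ) < (n:ℝ) := by exact_mod_cast Nat.pos_of_ne_zero (by omega)
    have he : (n:ℝ) + (1 - ε - r) = (n:ℝ) + 1 - ε - r := by ring
    have hs : ((n:ℝ)) ^ (-(2*γ - (1 - ε - r)))
        = (n:ℝ) ^ (1 - ε - r) / (n:ℝ) ^ (2*γ) := by
      rw [show -(2*γ - (1 - ε - r)) = (1 - ε - r) - 2*γ by ring, Real.rpow_sub hn0]
    have hGn : Real.Gamma (n:ℝ) ≠ 0 := ne_of_gt (Real.Gamma_pos_of_pos hn0)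
    have hq : ((n:ℝ) ^ (1 - ε - r)) ≠ 0 := ne_of_gt (Real.rpow_pos_of_pos hn0 _)
    have hq2 : ((n:ℝ) ^ (2*γ)) ≠ 0 := ne_of_gt (Real.rpow_pos_of_pos hn0 _)
    rw [he, hs]
    field_simp
  have N3 : Tendsto (fun n : ℕ => (n:ℝ) / (n:ℝ) ^ (2*γ)) atTop (nhds 0) := by
    have hpow : Tendsto (fun n : ℕ => ((n:ℝ)) ^ (-(2*γ - 1))) atTop (nhds 0) :=
      (tendsto_rpow_neg_atTop (by linarith)).comp tendsto_natCast_atTop_atTop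
    refine hpow.congr' ?_
    filter_upwards [eventually_ge_atTop 1] with n hn
    have hn0 : (0:ℝ) < (n:ℝ) := by exact_mod_cast Nat.pos_of_ne_zero (by omega)
    rw [show -(2*γ - 1) = 1 - 2*γ by ring, Real.rpow_sub hn0, Real.rpow_one]
  have final := ((tendsto_const_nhds (x := D)).mul N1).add
    (((tendsto_const_nhds (x := K2)).mul N2).add ((tendsto_const_nhds (x := K3)).mul N3))
  have hval : D * 1 + (K2 * 0 + K3 * 0) = D := by ring
  rw [hval] at final
  refine final.congr' ?_
  filter_upwards [eventually_ge_atTop 1] with n hn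
  have hn0 : (0:ℝ) < (n:ℝ) := by exact_mod_cast Nat.pos_of_ne_zero (by omega)
  have hGn : Real.Gamma (n:ℝ) ≠ 0 := ne_of_gt (Real.Gamma_pos_of_pos hn0)
  have hq : ((n:ℝ) ^ (2*γ)) ≠ 0 := ne_of_gt (Real.rpow_pos_of_pos hn0 _)
  rw [hclosed n hn]
  field_simp
  ring
end

section
/- Let ε, r ∈ (0,1) with ε + r < 1, and set C = r/((ε+r)·Γ(1−ε−r)). If a real sequence (y_t)_{t≥1} satisfies y_1 = 1 and y_{t+1} = (1 + 1/t)·y_t + C·Γ(t+1−ε−r)/Γ(t+1) + ε/(ε+r) for all t ≥ 1, then lim_{t→∞} y_t / (t·log t) = ε/(ε+r). -/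
open Real Filter

theorem erws_critical_tlogt (ε r : ℝ) (hε : ε ∈ Set.Ioo (0:ℝ) 1)
    (hr : r ∈ Set.Ioo (0:ℝ) 1) (hsum : ε + r < 1)
    (C : ℝ) (hC : C = r / ((ε + r) * Real.Gamma (1 - ε - r)))
    (y : ℕ → ℝ) (hy1 : y 1 = 1)
    (hrec : ∀ t : ℕ, 1 ≤ t → y (t + 1) = (1 + 1 / t) * y t
      + C * Real.Gamma ((t : ℝ) + 1 - ε - r) / Real.Gamma ((t : ℝ) + 1) + ε / (ε + r)) :
    Tendsto (fun t : ℕ => y t / ((t : ℝ) * Real.log t)) atTop (nhds (ε / (ε + r))) := by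
  obtain ⟨hε0, hε1⟩ := hε
  obtain ⟨hr0, hr1⟩ := hr
  set s : ℝ := ε + r with hs
  have hs0 : 0 < s := by positivity
  have hs1 : s < 1 := hsum
  set K : ℝ := ε / s with hK
  set b : ℕ → ℝ := fun k => Real.Gamma ((k : ℝ) + 1 - s) / Real.Gamma ((k : ℝ) + 1) with hb
  -- positivity of b
  have hbpos : ∀ k : ℕ, 0 < b k := by
    intro k
    have h1 : (0:ℝ) < (k : ℝ) + 1 - s := by
      have : (0:ℝ) ≤ (k : ℝ) := Nat.cast_nonneg k
      linarith
    have h2 : (0:ℝ) < (k : ℝ) + 1 := by positivity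
    exact div_pos (Real.Gamma_pos_of_pos h1) (Real.Gamma_pos_of_pos h2)
  -- key telescoping identity
  have hbstep : ∀ t : ℕ, b (t + 1) = b t * (((t:ℝ) + 1 - s) / ((t:ℝ) + 1)) := by
    intro t
    have h1 : (0:ℝ) < (t : ℝ) + 1 - s := by
      have : (0:ℝ) ≤ (t : ℝ) := Nat.cast_nonneg t
      linarith
    have h2 : (0:ℝ) < (t : ℝ) + 1 := by positivity
    have e1 : Real.Gamma (((t+1 : ℕ) : ℝ) + 1 - s) = ((t:ℝ) + 1 - s) * Real.Gamma ((t:ℝ) + 1 - s) := by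
      push_cast
      rw [show (t:ℝ) + 1 + 1 - s = ((t:ℝ) + 1 - s) + 1 by ring, Real.Gamma_add_one h1.ne']
    have e2 : Real.Gamma (((t+1 : ℕ) : ℝ) + 1) = ((t:ℝ) + 1) * Real.Gamma ((t:ℝ) + 1) := by
      push_cast
      rw [show (t:ℝ) + 1 + 1 = ((t:ℝ) + 1) + 1 by ring, Real.Gamma_add_one h2.ne']
    simp only [hb, e1, e2]
    field_simp
  have hbanti : ∀ t : ℕ, b (t + 1) ≤ b t := by
    intro t
    rw [hbstep t]
    have h2 : (0:ℝ) < (t : ℝ) + 1 := by positivity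
    have : ((t:ℝ) + 1 - s) / ((t:ℝ) + 1) ≤ 1 := by
      rw [div_le_one h2]; linarith
    calc b t * (((t:ℝ) + 1 - s) / ((t:ℝ) + 1)) ≤ b t * 1 := by
          apply mul_le_mul_of_nonneg_left this (hbpos t).le
      _ = b t := mul_one _
  have hble : ∀ t : ℕ, 1 ≤ t → b t ≤ b 1 := by
    intro t ht
    induction t with
    | zero => omega
    | succ n ih =>
      rcases Nat.eq_zero_or_pos n with h | h
      · subst h; exact le_refl _
      · exact (hbanti n).trans (ih h)
  -- explicit formula
  have hform : ∀ t : ℕ, 1 ≤ t →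
      y t = (t:ℝ) * (1 + (C / s) * (b 1 - b t) + K * ((harmonic t : ℝ) - 1)) := by
    intro t ht
    induction t with
    | zero => omega
    | succ n ih =>
      rcases Nat.lt_or_ge n 1 with h | h
      · interval_cases n
        simp [hy1, harmonic_succ]
      · have hn0 : (n:ℝ) ≠ 0 := by positivity
        have hn1 : (0:ℝ) < (n:ℝ) + 1 := by positivity
        have hyn := ih h
        have hrecn := hrec n h
        have hharm : (harmonic (n+1) : ℝ) = (harmonic n : ℝ) + 1 / ((n:ℝ)+1) := by
          rw [harmonic_succ]; push_cast; ring
        have hGpos : (0:ℝ) < Real.Gamma ((n:ℝ) + 1) := Real.Gamma_pos_of_pos hn1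
        have hGpos2 : (0:ℝ) < Real.Gamma ((n:ℝ) + 1 - s) := by
          apply Real.Gamma_pos_of_pos
          have : (1:ℝ) ≤ (n:ℝ) := by exact_mod_cast h
          linarith
        -- b n - b (n+1) = s * Γ(n+1-s) / ((n+1) Γ(n+1))
        have hkey : b n - b (n + 1) = s * (Real.Gamma ((n:ℝ) + 1 - s) / Real.Gamma ((n:ℝ) + 1)) / ((n:ℝ) + 1) := by
          rw [hbstep n]
          simp only [hb]
          field_simp
          ring
        have hC2 : C * Real.Gamma ((n:ℝ) + 1 - ε - r) / Real.Gamma ((n:ℝ) + 1)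
            = ((n:ℝ)+1) * ((C / s) * (b n - b (n+1))) := by
          rw [show (n:ℝ) + 1 - ε - r = (n:ℝ) + 1 - s by rw [hs]; ring, hkey]
          field_simp
        rw [hrecn, hyn, hharm, hC2]
        push_cast
        field_simp
        ring
  -- rewrite the sequence
  have heq : ∀ t : ℕ, 1 ≤ t →
      y t / ((t:ℝ) * Real.log t)
        = (1 + (C / s) * (b 1 - b t) - K) / Real.log t + K * ((harmonic t : ℝ) / Real.log t) := by
    intro t ht
    have ht0 : ((t:ℝ)) ≠ 0 := by
      have : (1:ℝ) ≤ (t:ℝ) := by exact_mod_cast ht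
      linarith
    rw [hform t ht, mul_div_mul_left _ _ ht0]
    rw [show 1 + (C / s) * (b 1 - b t) + K * ((harmonic t : ℝ) - 1)
        = (1 + (C / s) * (b 1 - b t) - K) + K * (harmonic t : ℝ) by ring]
    rw [add_div, mul_div_assoc]
  -- log tends to infinity
  have hlog : Tendsto (fun t : ℕ => Real.log t) atTop atTop :=
    Real.tendsto_log_atTop.comp tendsto_natCast_atTop_atTop
  -- harmonic / log → 1
  have hharmlog : Tendsto (fun t : ℕ => (harmonic t : ℝ) / Real.log t) atTop (nhds 1) := by
    have h1 : Tendsto (fun t : ℕ => ((harmonic t : ℝ) - Real.log t) / Real.log t) atTop (nhds 0) :=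
      Real.tendsto_harmonic_sub_log.div_atTop hlog
    have h2 := h1.add (tendsto_const_nhds (x := (1:ℝ)))
    rw [zero_add] at h2
    apply h2.congr'
    filter_upwards [eventually_ge_atTop 2] with t ht
    have hlt : (0:ℝ) < Real.log t := by
      apply Real.log_pos
      exact_mod_cast Nat.lt_of_lt_of_le one_lt_two ht
    field_simp
    ring
  -- first term → 0
  have hfirst : Tendsto (fun t : ℕ => (1 + (C / s) * (b 1 - b t) - K) / Real.log t) atTop (nhds 0) := by
    set M : ℝ := 1 + |C / s| * b 1 + |K| with hM
    have hMd : Tendsto (fun t : ℕ => M / Real.log t) atTop (nhds 0) :=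
      tendsto_const_nhds.div_atTop hlog
    apply squeeze_zero_norm' _ hMd
    filter_upwards [eventually_ge_atTop 2] with t ht
    have hlt : (0:ℝ) < Real.log t := by
      apply Real.log_pos
      exact_mod_cast Nat.lt_of_lt_of_le one_lt_two ht
    have hb1 : b t ≤ b 1 := hble t (by omega)
    have hbd : |b 1 - b t| ≤ b 1 := by
      rw [abs_of_nonneg (by linarith)]
      have := hbpos t
      linarith
    have hnum : |1 + (C / s) * (b 1 - b t) - K| ≤ M := by
      calc |1 + (C / s) * (b 1 - b t) - K|
          ≤ |1 + (C / s) * (b 1 - b t)| + |K| := abs_sub _ _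
        _ ≤ |(1:ℝ)| + |(C / s) * (b 1 - b t)| + |K| := by
            exact add_le_add_left (abs_add_le (1:ℝ) ((C / s) * (b 1 - b t))) _
        _ = 1 + |C / s| * |b 1 - b t| + |K| := by rw [abs_one, abs_mul]
        _ ≤ M := by
            rw [hM]
            have : |C / s| * |b 1 - b t| ≤ |C / s| * b 1 :=
              mul_le_mul_of_nonneg_left hbd (abs_nonneg _)
            linarith
    rw [norm_div, Real.norm_eq_abs, Real.norm_eq_abs, abs_of_pos hlt]
    gcongr
  -- combine
  have hmain : Tendsto (fun t : ℕ =>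
      (1 + (C / s) * (b 1 - b t) - K) / Real.log t + K * ((harmonic t : ℝ) / Real.log t))
      atTop (nhds K) := by
    have := hfirst.add ((hharmlog.const_mul K))
    simpa using this
  have : Tendsto (fun t : ℕ => y t / ((t : ℝ) * Real.log t)) atTop (nhds K) := by
    apply hmain.congr'
    filter_upwards [eventually_ge_atTop 1] with t ht
    exact (heq t ht).symm
  exact this
end

section
/- Let ε ∈ (0,1) and r ∈ (0,1/2) with ε + r < 1, set γ = (1−ε)/2 and C = r/((ε+r)·Γ(1−ε−r)). If a real sequence (y_t)_{t≥1} satisfies y_1 = 1 and y_{t+1} = (1 + 2γ/t)·y_t + C·Γ(t+1−ε−r)/Γ(t+1) + ε/(ε+r) for all t ≥ 1, then for every t ≥ 1, y_t = t/(ε+r) − Γ(t+1−ε−r)/((ε+r)·Γ(1−ε−r)·Γ(t)); in particular the coefficient D = −(1/Γ(2γ))·[ε/((ε+r)(1−2γ)) + r/((ε+r)(1−ε−r−2γ))] vanishes for this choice of γ. -/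
open Real

theorem erws_regular_diffusivity_formula (ε r : ℝ) (hε : ε ∈ Set.Ioo (0:ℝ) 1)
    (hr : r ∈ Set.Ioo (0:ℝ) (1/2)) (hsum : ε + r < 1)
    (γ : ℝ) (hγ : γ = (1 - ε) / 2)
    (C : ℝ) (hC : C = r / ((ε + r) * Real.Gamma (1 - ε - r)))
    (y : ℕ → ℝ) (hy1 : y 1 = 1)
    (hrec : ∀ t : ℕ, 1 ≤ t → y (t + 1) = (1 + 2 * γ / t) * y t
      + C * Real.Gamma ((t : ℝ) + 1 - ε - r) / Real.Gamma ((t : ℝ) + 1) + ε / (ε + r)) :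
    (∀ t : ℕ, 1 ≤ t →
      y t = (t : ℝ) / (ε + r)
        - Real.Gamma ((t : ℝ) + 1 - ε - r) / ((ε + r) * Real.Gamma (1 - ε - r) * Real.Gamma (t : ℝ)))
    ∧ -(1 / Real.Gamma (2 * γ)) *
        (ε / ((ε + r) * (1 - 2 * γ)) + r / ((ε + r) * (1 - ε - r - 2 * γ))) = 0 := by
  obtain ⟨hε0, hε1⟩ := hε
  obtain ⟨hr0, hr1⟩ := hr
  have hεr : (0:ℝ) < ε + r := by linarith
  have h1er : (0:ℝ) < 1 - ε - r := by linarith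
  have hG1 : Real.Gamma (1 - ε - r) ≠ 0 := (Real.Gamma_pos_of_pos h1er).ne'
  constructor
  · intro t ht
    induction t, ht using Nat.le_induction with
    | base =>
      rw [hy1]
      have h2 : Real.Gamma ((1:ℕ) + 1 - ε - r) = (1 - ε - r) * Real.Gamma (1 - ε - r) := by
        have := Real.Gamma_add_one (s := 1 - ε - r) h1er.ne'
        rw [← this]; norm_num; ring_nf
      rw [h2]
      push_cast
      rw [Real.Gamma_one]
      field_simp
      ring
    | succ t ht ih =>
      have htpos : (0:ℝ) < (t:ℝ) := by exact_mod_cast ht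
      have hGt : Real.Gamma ((t:ℝ)) ≠ 0 := (Real.Gamma_pos_of_pos htpos).ne'
      have hGt1 : Real.Gamma ((t:ℝ) + 1) = (t:ℝ) * Real.Gamma (t:ℝ) :=
        Real.Gamma_add_one htpos.ne'
      have harg : (0:ℝ) < (t:ℝ) + 1 - ε - r := by linarith
      have hGarg : Real.Gamma ((t:ℝ) + 1 - ε - r) ≠ 0 := (Real.Gamma_pos_of_pos harg).ne'
      have hGt2 : Real.Gamma ((t:ℝ) + 1 + 1 - ε - r)
          = ((t:ℝ) + 1 - ε - r) * Real.Gamma ((t:ℝ) + 1 - ε - r) := by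
        have := Real.Gamma_add_one (s := (t:ℝ) + 1 - ε - r) harg.ne'
        rw [← this]; ring_nf
      rw [hrec t ht, ih]
      push_cast
      rw [hGt2, hGt1, hC, hγ]
      field_simp
      ring
  · rw [hγ]
    have : ε / ((ε + r) * (1 - 2 * ((1 - ε) / 2))) + r / ((ε + r) * (1 - ε - r - 2 * ((1 - ε) / 2))) = 0 := by
      have h1 : 1 - 2 * ((1 - ε) / 2) = ε := by ring
      have h2 : 1 - ε - r - 2 * ((1 - ε) / 2) = -r := by ring
      rw [h1, h2]
      field_simp
      ring
    rw [this, mul_zero]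
end

section
/- Let ε ∈ (0,1) and r ∈ (0,1/2) with ε + r < 1, set γ = (1−ε)/2 and C = r/((ε+r)·Γ(1−ε−r)). If a real sequence (y_t)_{t≥1} satisfies y_1 = 1 and y_{t+1} = (1 + 2γ/t)·y_t + C·Γ(t+1−ε−r)/Γ(t+1) + ε/(ε+r) for all t ≥ 1, then lim_{t→∞} y_t / t = 1/(ε+r). Consequently this diffusivity converges, as ε → 0⁺, to the un-perturbed diffusivity 1/r, so no residual diffusivity arises for γ = (1−ε)/2. -/
open Real Filter

lemma gamma_ratio_le (s : ℝ) (hs0 : 0 < s) (hs1 : s < 1) (x : ℝ) (hx : 1 ≤ x) :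
    Real.Gamma (x + 1 - s) / Real.Gamma (x + 1) ≤ x ^ (-s) := by
  have hx0 : 0 < x := by linarith
  have hG1 : 0 < Real.Gamma x := Real.Gamma_pos_of_pos hx0
  have hG2 : 0 < Real.Gamma (x + 1) := Real.Gamma_pos_of_pos (by linarith)
  have hG3 : 0 < Real.Gamma (x + 1 - s) := Real.Gamma_pos_of_pos (by linarith)
  have hconv := Real.convexOn_log_Gamma.2 (Set.mem_Ioi.mpr hx0)
    (Set.mem_Ioi.mpr (by linarith : (0:ℝ) < x + 1)) hs0.le
    (by linarith : (0:ℝ) ≤ 1 - s) (by ring)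
  have hpt : s • x + (1 - s) • (x + 1) = x + 1 - s := by
    simp only [smul_eq_mul]; ring
  rw [hpt] at hconv
  simp only [Function.comp_apply, smul_eq_mul] at hconv
  have hle : Real.Gamma (x + 1 - s) ≤ Real.Gamma x ^ s * Real.Gamma (x + 1) ^ (1 - s) := by
    calc Real.Gamma (x + 1 - s) = Real.exp (Real.log (Real.Gamma (x + 1 - s))) :=
          (Real.exp_log hG3).symm
      _ ≤ Real.exp (s * Real.log (Real.Gamma x) + (1 - s) * Real.log (Real.Gamma (x + 1))) :=
          Real.exp_le_exp.mpr hconv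
      _ = Real.Gamma x ^ s * Real.Gamma (x + 1) ^ (1 - s) := by
          rw [Real.exp_add, Real.rpow_def_of_pos hG1, Real.rpow_def_of_pos hG2,
            mul_comm s, mul_comm (1 - s)]
  have hrec : Real.Gamma (x + 1) = x * Real.Gamma x := Real.Gamma_add_one hx0.ne'
  have key : Real.Gamma x ^ s * Real.Gamma (x + 1) ^ (1 - s) / Real.Gamma (x + 1)
      = x ^ (-s) := by
    rw [Real.rpow_sub hG2, Real.rpow_one, hrec]
    rw [Real.mul_rpow hx0.le hG1.le]
    rw [Real.rpow_neg hx0.le]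
    have hxs : (0:ℝ) < x ^ s := Real.rpow_pos_of_pos hx0 s
    have hGs : (0:ℝ) < Real.Gamma x ^ s := Real.rpow_pos_of_pos hG1 s
    field_simp
  calc Real.Gamma (x + 1 - s) / Real.Gamma (x + 1)
      ≤ Real.Gamma x ^ s * Real.Gamma (x + 1) ^ (1 - s) / Real.Gamma (x + 1) :=
        by gcongr
    _ = x ^ (-s) := key

lemma gamma_ratio_tendsto_s7 (s : ℝ) (hs0 : 0 < s) (hs1 : s < 1) :
    Tendsto (fun t : ℕ => Real.Gamma ((t : ℝ) + 1 - s) / Real.Gamma ((t : ℝ) + 1))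
      atTop (nhds 0) := by
  have hb : Tendsto (fun t : ℕ => (t : ℝ) ^ (-s)) atTop (nhds 0) :=
    (tendsto_rpow_neg_atTop hs0).comp tendsto_natCast_atTop_atTop
  refine squeeze_zero' ?_ ?_ hb
  · filter_upwards [eventually_ge_atTop 1] with t ht
    have h1 : (1:ℝ) ≤ (t:ℝ) := by exact_mod_cast ht
    exact div_nonneg (Real.Gamma_pos_of_pos (by linarith)).le
      (Real.Gamma_pos_of_pos (by linarith)).le
  · filter_upwards [eventually_ge_atTop 1] with t ht
    exact gamma_ratio_le s hs0 hs1 t (by exact_mod_cast ht)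

theorem erws_no_residual_diffusivity (ε r : ℝ) (hε : ε ∈ Set.Ioo (0:ℝ) 1)
    (hr : r ∈ Set.Ioo (0:ℝ) (1/2)) (hsum : ε + r < 1)
    (γ : ℝ) (hγ : γ = (1 - ε) / 2)
    (C : ℝ) (hC : C = r / ((ε + r) * Real.Gamma (1 - ε - r)))
    (y : ℕ → ℝ) (hy1 : y 1 = 1)
    (hrec : ∀ t : ℕ, 1 ≤ t → y (t + 1) = (1 + 2 * γ / t) * y t
      + C * Real.Gamma ((t : ℝ) + 1 - ε - r) / Real.Gamma ((t : ℝ) + 1) + ε / (ε + r)) :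
    Tendsto (fun t : ℕ => y t / t) atTop (nhds (1 / (ε + r)))
    ∧ Tendsto (fun e : ℝ => 1 / (e + r)) (nhdsWithin 0 (Set.Ioi 0)) (nhds (1 / r)) := by
  obtain ⟨hε0, hε1⟩ := hε
  obtain ⟨hr0, hr1⟩ := hr
  have hs0 : (0:ℝ) < ε + r := by linarith
  have hs1 : ε + r < 1 := hsum
  have hΓ1s : (0:ℝ) < Real.Gamma (1 - ε - r) := Real.Gamma_pos_of_pos (by linarith)
  constructor
  · -- closed form : y t = t/(ε+r) - (C/r) * Γ(t+1-ε-r)/Γ(t)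
    have key : ∀ t : ℕ, 1 ≤ t →
        y t = t / (ε + r) - (C / r) * (Real.Gamma ((t:ℝ) + 1 - ε - r) / Real.Gamma t) := by
      intro t ht
      induction t with
      | zero => omega
      | succ n ih =>
        rcases Nat.lt_or_ge n 1 with h1 | h1
        · -- n = 0, base case t = 1
          interval_cases n
          have h2 : ((1:ℕ):ℝ) + 1 - ε - r = (1 - ε - r) + 1 := by push_cast; ring
          rw [hy1, h2, Real.Gamma_add_one (by linarith : (1:ℝ) - ε - r ≠ 0)]
          rw [show ((1:ℕ):ℝ) = (1:ℝ) by norm_num, Real.Gamma_one, hC]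
          field_simp
          ring
        · have hn0 : (0:ℝ) < n := by exact_mod_cast h1
          have hGn : (0:ℝ) < Real.Gamma n := Real.Gamma_pos_of_pos hn0
          have hG : (0:ℝ) < Real.Gamma ((n:ℝ) + 1 - ε - r) :=
            Real.Gamma_pos_of_pos (by linarith)
          have e1 : Real.Gamma ((n:ℝ) + 1) = n * Real.Gamma n :=
            Real.Gamma_add_one hn0.ne'
          have e2 : Real.Gamma (((n+1:ℕ):ℝ) + 1 - ε - r)
              = ((n:ℝ) + 1 - ε - r) * Real.Gamma ((n:ℝ) + 1 - ε - r) := by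
            rw [show (((n+1:ℕ):ℝ) + 1 - ε - r) = ((n:ℝ) + 1 - ε - r) + 1 by push_cast; ring]
            exact Real.Gamma_add_one (by linarith)
          have e3 : Real.Gamma ((n+1:ℕ):ℝ) = n * Real.Gamma n := by
            rw [show ((n+1:ℕ):ℝ) = (n:ℝ) + 1 by push_cast; ring]; exact e1
          rw [hrec n h1, ih h1, e2, e3, e1, hγ]
          have hC' : C * (ε + r) * Real.Gamma (1 - ε - r) = r := by
            rw [hC]; field_simp
          field_simp
          push_cast
          nlinarith [hC', sq_nonneg ((n:ℝ) * Real.Gamma n), hGn, hG]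
    have hratio : Tendsto (fun t : ℕ => Real.Gamma ((t:ℝ) + 1 - ε - r) / Real.Gamma ((t:ℝ) + 1))
        atTop (nhds 0) := by
      have := gamma_ratio_tendsto_s7 (ε + r) hs0 hs1
      convert this using 3 with t
      ring
    have hmain := Tendsto.sub
      (tendsto_const_nhds : Tendsto (fun _ : ℕ => 1 / (ε + r)) atTop (nhds (1 / (ε + r))))
      (hratio.const_mul (C / r))
    rw [mul_zero, sub_zero] at hmain
    simp only [mul_comm (C / r)] at hmain
    refine hmain.congr' ?_
    filter_upwards [eventually_ge_atTop 1] with t ht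
    have hn0 : (0:ℝ) < t := by exact_mod_cast ht
    have hGn : (0:ℝ) < Real.Gamma t := Real.Gamma_pos_of_pos hn0
    have e1 : Real.Gamma ((t:ℝ) + 1) = t * Real.Gamma t := Real.Gamma_add_one hn0.ne'
    rw [key t ht, e1]
    field_simp
  · have hcont : ContinuousAt (fun e : ℝ => 1 / (e + r)) 0 := by
      apply ContinuousAt.div continuousAt_const (by fun_prop)
      simp; linarith
    have := hcont.tendsto
    simp only [zero_add] at this
    exact this.mono_left nhdsWithin_le_nhds
end

section
/- Let ε ∈ (0,1) and r ∈ (0,1/2) with ε + r < 1, set γ = (1−εr)/2 and C = r/((ε+r)·Γ(1−ε−r)). If a real sequence (y_t)_{t≥1} satisfies y_1 = 1 and y_{t+1} = (1 + 2γ/t)·y_t + C·Γ(t+1−ε−r)/Γ(t+1) + ε/(ε+r) for all t ≥ 1, then lim_{t→∞} y_t / t = 1/(r(ε+r)). -/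
open Real Filter

private lemma gamma_ratio_tendsto_zero {a : ℝ} (ha0 : 0 < a) (ha1 : a < 1) :
    Tendsto (fun n : ℕ => Real.Gamma ((n : ℝ) + a) / Real.Gamma ((n : ℝ) + 1))
      atTop (nhds 0) := by
  have hbound : Tendsto (fun n : ℕ => ((n : ℝ)) ^ (a - 1)) atTop (nhds 0) := by
    have := tendsto_rpow_neg_atTop (y := 1 - a) (by linarith)
    have h2 := this.comp tendsto_natCast_atTop_atTop (α := ℕ)
    convert h2 using 2 with n
    rw [Function.comp_apply]
    congr 1
    ring
  refine squeeze_zero' ?_ ?_ hbound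
  · filter_upwards [eventually_ge_atTop 1] with n hn
    have hn' : (0:ℝ) < n := by exact_mod_cast Nat.lt_of_lt_of_le Nat.zero_lt_one hn
    have h1 : 0 < Real.Gamma ((n:ℝ) + a) := Real.Gamma_pos_of_pos (by linarith)
    have h2 : 0 < Real.Gamma ((n:ℝ) + 1) := Real.Gamma_pos_of_pos (by linarith)
    positivity
  · filter_upwards [eventually_ge_atTop 1] with n hn
    have hn' : (0:ℝ) < n := by exact_mod_cast Nat.lt_of_lt_of_le Nat.zero_lt_one hn
    have hG : 0 < Real.Gamma (n:ℝ) := Real.Gamma_pos_of_pos hn'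
    have hG1 : 0 < Real.Gamma ((n:ℝ) + 1) := Real.Gamma_pos_of_pos (by linarith)
    have key : Real.Gamma ((n:ℝ) + a) ≤
        Real.Gamma (n:ℝ) ^ (1 - a) * Real.Gamma ((n:ℝ) + 1) ^ a := by
      have := Real.Gamma_mul_add_mul_le_rpow_Gamma_mul_rpow_Gamma
        (s := (n:ℝ)) (t := (n:ℝ) + 1) (a := 1 - a) (b := a)
        hn' (by linarith) (by linarith) ha0 (by ring)
      convert this using 2
      ring
    have hΓ1 : Real.Gamma ((n:ℝ) + 1) = (n:ℝ) * Real.Gamma (n:ℝ) :=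
      Real.Gamma_add_one hn'.ne'
    rw [div_le_iff₀ hG1]
    calc Real.Gamma ((n:ℝ) + a)
        ≤ Real.Gamma (n:ℝ) ^ (1 - a) * Real.Gamma ((n:ℝ) + 1) ^ a := key
      _ = (n:ℝ) ^ (a - 1) * Real.Gamma ((n:ℝ) + 1) := by
          rw [hΓ1, Real.mul_rpow hn'.le hG.le]
          have e1 : Real.Gamma (n:ℝ) ^ (1 - a) * Real.Gamma (n:ℝ) ^ a
              = Real.Gamma (n:ℝ) := by
            rw [← Real.rpow_add hG]; norm_num
          have e2 : (n:ℝ) ^ a = (n:ℝ) ^ (a - 1) * (n:ℝ) := by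
            rw [show a = (a - 1) + 1 by ring, Real.rpow_add hn', Real.rpow_one]
            ring_nf
          rw [e2]
          linear_combination ((n:ℝ) ^ (a - 1) * (n:ℝ)) * e1

theorem erws_residual_diffusivity (ε r : ℝ) (hε : ε ∈ Set.Ioo (0:ℝ) 1)
    (hr : r ∈ Set.Ioo (0:ℝ) (1/2)) (hsum : ε + r < 1)
    (γ : ℝ) (hγ : γ = (1 - ε * r) / 2)
    (C : ℝ) (hC : C = r / ((ε + r) * Real.Gamma (1 - ε - r)))
    (y : ℕ → ℝ) (hy1 : y 1 = 1)
    (hrec : ∀ t : ℕ, 1 ≤ t → y (t + 1) = (1 + 2 * γ / t) * y t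
      + C * Real.Gamma ((t : ℝ) + 1 - ε - r) / Real.Gamma ((t : ℝ) + 1) + ε / (ε + r)) :
    Tendsto (fun t : ℕ => y t / t) atTop (nhds (1 / (r * (ε + r)))) := by
  obtain ⟨hε0, hε1⟩ := hε
  obtain ⟨hr0, hr1⟩ := hr
  have her : 0 < ε + r := by linarith
  set A : ℝ := 1 - ε - r with hA
  set B : ℝ := 1 - ε * r with hB
  have hA0 : 0 < A := by simp only [hA]; linarith
  have hA1 : A < 1 := by simp only [hA]; linarith
  have hB0 : 0 < B := by simp only [hB]; nlinarith
  have hB1 : B < 1 := by simp only [hB]; nlinarith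
  set U : ℝ := 1 / (r * (ε + r)) with hU
  have hden : ε * r - ε - r < 0 := by nlinarith
  set δ : ℝ := C / (ε * r - ε - r) with hδ
  have hΓ1B : 0 < Real.Gamma (1 + B) := Real.Gamma_pos_of_pos (by linarith)
  set K : ℝ := (1 - U - δ * Real.Gamma (1 + A)) / Real.Gamma (1 + B) with hK
  have hCδ : C = δ * (ε * r - ε - r) := by
    rw [hδ, div_mul_cancel₀ _ hden.ne]
  have h2γ : 2 * γ = B := by rw [hγ, hB]; ring
  -- closed form
  have hform : ∀ t : ℕ, 1 ≤ t → y t = U * t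
      + δ * Real.Gamma ((t : ℝ) + A) / Real.Gamma (t : ℝ)
      + K * Real.Gamma ((t : ℝ) + B) / Real.Gamma (t : ℝ) := by
    intro t ht
    induction t with
    | zero => omega
    | succ n ih =>
      rcases Nat.lt_or_ge n 1 with hn | hn
      · interval_cases n
        rw [hy1]
        push_cast
        rw [Real.Gamma_one, hK]
        field_simp
        ring
      · have hrecn := hrec n hn
        have hnpos : (0:ℝ) < n := by exact_mod_cast hn
        have hΓn : 0 < Real.Gamma (n : ℝ) := Real.Gamma_pos_of_pos hnpos
        have gA : Real.Gamma ((n:ℝ) + 1 + A) = ((n:ℝ) + A) * Real.Gamma ((n:ℝ) + A) := by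
          rw [show (n:ℝ) + 1 + A = ((n:ℝ) + A) + 1 by ring,
            Real.Gamma_add_one (by positivity)]
        have gB : Real.Gamma ((n:ℝ) + 1 + B) = ((n:ℝ) + B) * Real.Gamma ((n:ℝ) + B) := by
          rw [show (n:ℝ) + 1 + B = ((n:ℝ) + B) + 1 by ring,
            Real.Gamma_add_one (by positivity)]
        have g1 : Real.Gamma ((n:ℝ) + 1) = (n:ℝ) * Real.Gamma (n:ℝ) :=
          Real.Gamma_add_one hnpos.ne'
        have hAeq : (n:ℝ) + 1 - ε - r = (n:ℝ) + A := by rw [hA]; ring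
        rw [hAeq, g1] at hrecn
        push_cast
        rw [hrecn, ih hn, gA, gB, g1, hCδ, h2γ, hU]
        field_simp
        ring
  -- limit
  have h1 := gamma_ratio_tendsto_zero hA0 hA1
  have h2 := gamma_ratio_tendsto_zero hB0 hB1
  have hlim : Tendsto (fun t : ℕ => U
      + δ * (Real.Gamma ((t:ℝ) + A) / Real.Gamma ((t:ℝ) + 1))
      + K * (Real.Gamma ((t:ℝ) + B) / Real.Gamma ((t:ℝ) + 1)))
      atTop (nhds (U + δ * 0 + K * 0)) :=
    ((tendsto_const_nhds.add (h1.const_mul δ)).add (h2.const_mul K))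
  have : U + δ * 0 + K * 0 = 1 / (r * (ε + r)) := by rw [hU]; ring
  rw [this] at hlim
  refine hlim.congr' ?_
  filter_upwards [eventually_ge_atTop 1] with t ht
  have hnpos : (0:ℝ) < t := by exact_mod_cast ht
  have hΓn : 0 < Real.Gamma (t : ℝ) := Real.Gamma_pos_of_pos hnpos
  have g1 : Real.Gamma ((t:ℝ) + 1) = (t:ℝ) * Real.Gamma (t:ℝ) :=
    Real.Gamma_add_one hnpos.ne'
  rw [hform t ht, g1]
  field_simp
end

section
/- Let ε, r ∈ (0,1) with ε + r < 1, set γ = (1+εr)/2 and C = r/((ε+r)·Γ(1−ε−r)). If a real sequence (y_t)_{t≥1} satisfies y_1 = 1 and y_{t+1} = (1 + 2γ/t)·y_t + C·Γ(t+1−ε−r)/Γ(t+1) + ε/(ε+r) for all t ≥ 1, then lim_{t→∞} y_t / t^{1+εr} = (1/Γ(1+εr))·[1/(r(ε+r)) + r/((ε+r)(ε+r+εr))]. -/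
open Real Filter

private lemma gamma_prod (s : ℝ) (hs : 0 < s) (n : ℕ) :
    Real.Gamma (s + n + 1) = Real.Gamma s * ∏ j ∈ Finset.range (n + 1), (s + j) := by
  induction n with
  | zero => simp [Real.Gamma_add_one hs.ne', mul_comm]
  | succ n ih =>
      have h1 : s + (n : ℝ) + 1 ≠ 0 := by positivity
      have h2 : s + ((n + 1 : ℕ) : ℝ) + 1 = (s + (n : ℝ) + 1) + 1 := by push_cast; ring
      rw [h2, Real.Gamma_add_one h1, ih, Finset.prod_range_succ (fun j => s + (j : ℝ)) (n + 1)]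
      have h3 : ((n + 1 : ℕ) : ℝ) = (n : ℝ) + 1 := by push_cast; ring
      rw [h3]
      ring

private lemma gamma_ratio (s : ℝ) (hs : 0 < s) :
    Tendsto (fun n : ℕ => Real.Gamma ((n : ℝ) + s) / (Real.Gamma (n : ℝ) * (n : ℝ) ^ s))
      atTop (nhds 1) := by
  have hΓ : Real.Gamma s ≠ 0 := (Real.Gamma_pos_of_pos hs).ne'
  have key : Tendsto (fun n : ℕ => Real.Gamma s / Real.GammaSeq s n) atTop (nhds 1) := by
    have h := Filter.Tendsto.div (tendsto_const_nhds (x := Real.Gamma s))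
      (Real.GammaSeq_tendsto_Gamma s) hΓ
    rw [div_self hΓ] at h
    exact h
  have hfrac : Tendsto (fun n : ℕ => ((n : ℝ) / ((n : ℝ) + 1)) ^ s) atTop (nhds 1) := by
    have h1 : Tendsto (fun n : ℕ => (n : ℝ) / ((n : ℝ) + 1)) atTop (nhds 1) := by
      have h2 : Tendsto (fun n : ℕ => 1 - 1 / ((n : ℝ) + 1)) atTop (nhds (1 - 0)) :=
        tendsto_const_nhds.sub tendsto_one_div_add_atTop_nhds_zero_nat
      rw [sub_zero] at h2
      refine h2.congr fun n => ?_
      have hn : ((n : ℝ) + 1) ≠ 0 := by positivity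
      field_simp
      ring
    have hc := (Real.continuousAt_rpow_const 1 s (Or.inl one_ne_zero)).tendsto.comp h1
    simpa [Function.comp_def] using hc
  rw [← Filter.tendsto_add_atTop_iff_nat 1]
  have hmain := key.mul hfrac
  rw [mul_one] at hmain
  refine hmain.congr' ?_
  filter_upwards [eventually_ge_atTop 1] with n hn
  have hn0 : (0 : ℝ) < n := by exact_mod_cast hn
  have hP : 0 < ∏ j ∈ Finset.range (n + 1), (s + (j : ℝ)) :=
    Finset.prod_pos fun j _ => by positivity
  have hfac : (0 : ℝ) < (n.factorial : ℝ) := by exact_mod_cast n.factorial_pos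
  have hns : (0 : ℝ) < (n : ℝ) ^ s := Real.rpow_pos_of_pos hn0 s
  have hn1s : (0 : ℝ) < ((n : ℝ) + 1) ^ s := Real.rpow_pos_of_pos (by positivity) s
  have hGfact : Real.Gamma (((n + 1 : ℕ) : ℝ)) = (n.factorial : ℝ) := by
    push_cast
    exact Real.Gamma_nat_eq_factorial n
  have harg : ((n + 1 : ℕ) : ℝ) + s = s + (n : ℝ) + 1 := by push_cast; ring
  have hcast : ((n + 1 : ℕ) : ℝ) = (n : ℝ) + 1 := by push_cast; ring
  rw [Real.GammaSeq, harg, gamma_prod s hs n, hGfact, hcast,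
    Real.div_rpow hn0.le (by positivity)]
  field_simp

theorem erws_residual_superdiffusivity (ε r : ℝ) (hε : ε ∈ Set.Ioo (0:ℝ) 1)
    (hr : r ∈ Set.Ioo (0:ℝ) 1) (hsum : ε + r < 1)
    (γ : ℝ) (hγ : γ = (1 + ε * r) / 2)
    (C : ℝ) (hC : C = r / ((ε + r) * Real.Gamma (1 - ε - r)))
    (y : ℕ → ℝ) (hy1 : y 1 = 1)
    (hrec : ∀ t : ℕ, 1 ≤ t → y (t + 1) = (1 + 2 * γ / t) * y t
      + C * Real.Gamma ((t : ℝ) + 1 - ε - r) / Real.Gamma ((t : ℝ) + 1) + ε / (ε + r)) :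
    Tendsto (fun t : ℕ => y t / (t : ℝ) ^ (1 + ε * r)) atTop
      (nhds ((1 / Real.Gamma (1 + ε * r)) *
        (1 / (r * (ε + r)) + r / ((ε + r) * (ε + r + ε * r))))) := by
  obtain ⟨hε0, hε1⟩ := hε
  obtain ⟨hr0, hr1⟩ := hr
  set a : ℝ := 1 + ε * r with ha
  set b : ℝ := 1 - ε - r with hb
  have hεr : 0 < ε * r := mul_pos hε0 hr0
  have hb0 : 0 < b := by rw [hb]; linarith
  have ha1 : 1 < a := by rw [ha]; linarith
  have ha0 : 0 < a := by linarith
  have hepr : 0 < ε + r := by linarith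
  have hD : 0 < ε + r + ε * r := by linarith
  have hΓb : 0 < Real.Gamma b := Real.Gamma_pos_of_pos hb0
  have hΓ1a : 0 < Real.Gamma (1 + a) := Real.Gamma_pos_of_pos (by linarith)
  have hΓ1εr : 0 < Real.Gamma (1 + ε * r) := Real.Gamma_pos_of_pos (by linarith)
  set K : ℝ := -C / (ε + r + ε * r) with hK
  set A : ℝ := (1 + 1 / (r * (ε + r)) - K * Real.Gamma (1 + b)) / Real.Gamma (1 + a) with hA
  -- closed form for y
  have hclosed : ∀ t : ℕ, 1 ≤ t → y t = A * (Real.Gamma ((t : ℝ) + a) / Real.Gamma (t : ℝ))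
      + K * (Real.Gamma ((t : ℝ) + b) / Real.Gamma (t : ℝ)) - (t : ℝ) / (r * (ε + r)) := by
    intro t ht
    induction t with
    | zero => omega
    | succ t ih =>
      rcases Nat.lt_or_ge t 1 with h | h
      · -- t = 0, base case
        interval_cases t
        have hg1 : Real.Gamma ((1 : ℕ) : ℝ) = 1 := by norm_num [Real.Gamma_one]
        rw [hy1]
        push_cast
        rw [Real.Gamma_one, hA]
        field_simp
        ring
      · have hzt := ih h
        have ht0 : (0 : ℝ) < t := by exact_mod_cast h
        have hta : (t : ℝ) + a ≠ 0 := by positivity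
        have htb : (t : ℝ) + b ≠ 0 := by positivity
        have htne : (t : ℝ) ≠ 0 := ht0.ne'
        have hGt : Real.Gamma (t : ℝ) ≠ 0 := (Real.Gamma_pos_of_pos ht0).ne'
        have e1 : Real.Gamma (((t + 1 : ℕ) : ℝ) + a) = ((t : ℝ) + a) * Real.Gamma ((t : ℝ) + a) := by
          rw [show (((t + 1 : ℕ) : ℝ) + a) = ((t : ℝ) + a) + 1 by push_cast; ring,
            Real.Gamma_add_one hta]
        have e2 : Real.Gamma (((t + 1 : ℕ) : ℝ) + b) = ((t : ℝ) + b) * Real.Gamma ((t : ℝ) + b) := by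
          rw [show (((t + 1 : ℕ) : ℝ) + b) = ((t : ℝ) + b) + 1 by push_cast; ring,
            Real.Gamma_add_one htb]
        have e3 : Real.Gamma ((t : ℝ) + 1) = (t : ℝ) * Real.Gamma (t : ℝ) :=
          Real.Gamma_add_one htne
        have e4 : Real.Gamma ((t : ℝ) + 1 - ε - r) = Real.Gamma ((t : ℝ) + b) := by
          rw [show (t : ℝ) + 1 - ε - r = (t : ℝ) + b by rw [hb]; ring]
        rw [hrec t h, hzt, e4, e1, e2,
          show (((t + 1 : ℕ)) : ℝ) = (t : ℝ) + 1 by push_cast; ring, e3]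
        rw [hγ, hK]
        field_simp
        ring
  -- limit components
  have h1 := gamma_ratio a ha0
  have h2 := gamma_ratio b hb0
  have h3 : Tendsto (fun n : ℕ => (n : ℝ) ^ (b - a)) atTop (nhds 0) := by
    have h := (tendsto_rpow_neg_atTop (show (0:ℝ) < a - b by linarith)).comp
      tendsto_natCast_atTop_atTop
    simpa [neg_sub, Function.comp_def] using h
  have h4 : Tendsto (fun n : ℕ => (n : ℝ) ^ (1 - a)) atTop (nhds 0) := by
    have h := (tendsto_rpow_neg_atTop (show (0:ℝ) < a - 1 by linarith)).comp
      tendsto_natCast_atTop_atTop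
    simpa [neg_sub, Function.comp_def] using h
  have hcomb : Tendsto (fun n : ℕ =>
      A * (Real.Gamma ((n : ℝ) + a) / (Real.Gamma (n : ℝ) * (n : ℝ) ^ a))
      + K * (Real.Gamma ((n : ℝ) + b) / (Real.Gamma (n : ℝ) * (n : ℝ) ^ b)) * (n : ℝ) ^ (b - a)
      - (1 / (r * (ε + r))) * (n : ℝ) ^ (1 - a)) atTop
      (nhds (A * 1 + K * 1 * 0 - (1 / (r * (ε + r))) * 0)) :=
    ((tendsto_const_nhds.mul h1).add ((tendsto_const_nhds.mul h2).mul h3)).sub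
      (tendsto_const_nhds.mul h4)
  rw [show A * 1 + K * 1 * 0 - (1 / (r * (ε + r))) * 0 = A by ring] at hcomb
  have heq : (fun t : ℕ => y t / (t : ℝ) ^ (1 + ε * r)) =ᶠ[atTop] (fun n : ℕ =>
      A * (Real.Gamma ((n : ℝ) + a) / (Real.Gamma (n : ℝ) * (n : ℝ) ^ a))
      + K * (Real.Gamma ((n : ℝ) + b) / (Real.Gamma (n : ℝ) * (n : ℝ) ^ b)) * (n : ℝ) ^ (b - a)
      - (1 / (r * (ε + r))) * (n : ℝ) ^ (1 - a)) := by
    filter_upwards [eventually_ge_atTop 1] with t ht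
    have ht0 : (0 : ℝ) < t := by exact_mod_cast ht
    have hGt : Real.Gamma (t : ℝ) ≠ 0 := (Real.Gamma_pos_of_pos ht0).ne'
    have hta : (0 : ℝ) < (t : ℝ) ^ a := Real.rpow_pos_of_pos ht0 a
    have htb : (0 : ℝ) < (t : ℝ) ^ b := Real.rpow_pos_of_pos ht0 b
    rw [hclosed t ht, ← ha, Real.rpow_sub ht0 b a, Real.rpow_sub ht0 1 a, Real.rpow_one]
    field_simp
  have hval : A = (1 / Real.Gamma (1 + ε * r)) *
      (1 / (r * (ε + r)) + r / ((ε + r) * (ε + r + ε * r))) := by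
    have hG2 : Real.Gamma (1 + a) = (1 + ε * r) * Real.Gamma (1 + ε * r) := by
      rw [ha, show (1 : ℝ) + (1 + ε * r) = (1 + ε * r) + 1 by ring,
        Real.Gamma_add_one (by positivity)]
    have hGb2 : Real.Gamma (1 + b) = (1 - ε - r) * Real.Gamma (1 - ε - r) := by
      rw [hb, show (1 : ℝ) + (1 - ε - r) = (1 - ε - r) + 1 by ring,
        Real.Gamma_add_one (by linarith)]
    have hΓbne : Real.Gamma (1 - ε - r) ≠ 0 := by
      have : Real.Gamma b ≠ 0 := hΓb.ne'
      rwa [hb] at this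
    rw [hA, hK, hC, hG2, hGb2]
    have h1εr : (1 : ℝ) + ε * r ≠ 0 := by positivity
    field_simp
    ring
  rw [← hval] at *
  exact hcomb.congr' heq.symm
end

section
/- Let (Ω, 𝓕, ℙ) be a probability space with a filtration (𝓕_t)_{t≥1}, let γ, γ' be real numbers, let A be the rotation of ℝ² by π/2 (A(x,y) = (−y,x)), and let (σ_k)_{k≥1} be an adapted process with values in {i, j, −i, −j, 0} ⊂ ℝ²; set X_t = ∑_{k=1}^t σ_k. Suppose that for every t ≥ 1, almost surely 𝔼[σ_{t+1} | 𝓕_t] = (1/t)·(γ·X_t + γ'·A X_t). Then for every t ≥ 1, 𝔼[|X_{t+1}|²] = (1 + 2γ/t)·𝔼[|X_t|²] + 𝔼[|σ_{t+1}|²]; in particular the parameter γ' does not enter, since X_t · (A X_t) = 0. -/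
open MeasureTheory Filter Set

/-- Euclidean dot product on `ℝ × ℝ`. -/
def dot2 (a b : ℝ × ℝ) : ℝ := a.1 * b.1 + a.2 * b.2

/-- Rotation of `ℝ²` by `π/2`: `A (x, y) = (-y, x)`. -/
def rotA (v : ℝ × ℝ) : ℝ × ℝ := (-v.2, v.1)

/-- Squared Euclidean norm on `ℝ × ℝ`. -/
def nsq2 (v : ℝ × ℝ) : ℝ := v.1 ^ 2 + v.2 ^ 2

/-- First component of a conditional expectation. -/
lemma condexp_fst_aux {Ω : Type*} {m' : MeasurableSpace Ω} [m0 : MeasurableSpace Ω]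
    (μ : Measure Ω) [IsProbabilityMeasure μ] (hm : m' ≤ m0)
    (f : Ω → ℝ × ℝ) (hf : Integrable f μ) :
    (fun ω => ((μ[f|m']) ω).1) =ᵐ[μ] μ[fun ω => (f ω).1|m'] := by
  haveI : SigmaFinite (μ.trim hm) := inferInstance
  refine ae_eq_condExp_of_forall_setIntegral_eq hm hf.fst
    (fun s _ _ => integrable_condExp.fst.integrableOn) (fun s hs hμs => ?_)
    ((continuous_fst.comp_stronglyMeasurable (stronglyMeasurable_condExp (m := m') (f := f) (μ := μ))).aestronglyMeasurable)
  have h1 : ∫ x in s, ((μ[f|m']) x).1 ∂μ = (∫ x in s, (μ[f|m']) x ∂μ).1 :=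
    (ContinuousLinearMap.fst ℝ ℝ ℝ).integral_comp_comm integrable_condExp.integrableOn
  have h2 : ∫ x in s, (f x).1 ∂μ = (∫ x in s, f x ∂μ).1 :=
    (ContinuousLinearMap.fst ℝ ℝ ℝ).integral_comp_comm hf.integrableOn
  rw [h1, h2, setIntegral_condExp hm hf hs]

/-- Second component of a conditional expectation. -/
lemma condexp_snd_aux {Ω : Type*} {m' : MeasurableSpace Ω} [m0 : MeasurableSpace Ω]
    (μ : Measure Ω) [IsProbabilityMeasure μ] (hm : m' ≤ m0)
    (f : Ω → ℝ × ℝ) (hf : Integrable f μ) :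
    (fun ω => ((μ[f|m']) ω).2) =ᵐ[μ] μ[fun ω => (f ω).2|m'] := by
  haveI : SigmaFinite (μ.trim hm) := inferInstance
  refine ae_eq_condExp_of_forall_setIntegral_eq hm hf.snd
    (fun s _ _ => integrable_condExp.snd.integrableOn) (fun s hs hμs => ?_)
    ((continuous_snd.comp_stronglyMeasurable (stronglyMeasurable_condExp (m := m') (f := f) (μ := μ))).aestronglyMeasurable)
  have h1 : ∫ x in s, ((μ[f|m']) x).2 ∂μ = (∫ x in s, (μ[f|m']) x ∂μ).2 :=
    (ContinuousLinearMap.snd ℝ ℝ ℝ).integral_comp_comm integrable_condExp.integrableOn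
  have h2 : ∫ x in s, (f x).2 ∂μ = (∫ x in s, f x ∂μ).2 :=
    (ContinuousLinearMap.snd ℝ ℝ ℝ).integral_comp_comm hf.integrableOn
  rw [h1, h2, setIntegral_condExp hm hf hs]

theorem erws2d_second_moment_recurrence {Ω : Type*} [m : MeasurableSpace Ω]
    (μ : Measure Ω) [IsProbabilityMeasure μ]
    (ℱ : Filtration ℕ m) (γ γ' : ℝ)
    (σ : ℕ → Ω → ℝ × ℝ) (hadapted : Adapted ℱ σ)
    (hσval : ∀ k : ℕ, 1 ≤ k → ∀ ω,
      σ k ω ∈ ({(1, 0), (0, 1), (-1, 0), (0, -1), (0, 0)} : Set (ℝ × ℝ)))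
    (X : ℕ → Ω → ℝ × ℝ) (hX : ∀ t ω, X t ω = ∑ k ∈ Finset.Icc 1 t, σ k ω)
    (hcond : ∀ t : ℕ, 1 ≤ t → ∀ᵐ ω ∂μ,
      (μ[σ (t + 1) | ℱ t]) ω = (1 / (t : ℝ)) • (γ • X t ω + γ' • rotA (X t ω))) :
    (∀ t : ℕ, 1 ≤ t →
      ∫ ω, nsq2 (X (t + 1) ω) ∂μ
        = (1 + 2 * γ / t) * ∫ ω, nsq2 (X t ω) ∂μ + ∫ ω, nsq2 (σ (t + 1) ω) ∂μ)
    ∧ (∀ v : ℝ × ℝ, dot2 v (rotA v) = 0) := by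
  have hrot : ∀ v : ℝ × ℝ, dot2 v (rotA v) = 0 := by
    intro v; simp [dot2, rotA]; ring
  refine ⟨?_, hrot⟩
  intro t ht
  have hm : (ℱ t : MeasurableSpace Ω) ≤ m := ℱ.le t
  haveI : SigmaFinite (μ.trim hm) := inferInstance
  -- bounds on σ
  have hσb : ∀ k, 1 ≤ k → ∀ ω, |(σ k ω).1| ≤ 1 ∧ |(σ k ω).2| ≤ 1 := by
    intro k hk ω
    have h := hσval k hk ω
    simp only [Set.mem_insert_iff, Set.mem_singleton_iff] at h
    rcases h with h | h | h | h | h <;> rw [h] <;> norm_num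
  -- measurability of σ
  have hσm : ∀ k, StronglyMeasurable (σ k) := fun k => ((hadapted k).mono (ℱ.le k) le_rfl).stronglyMeasurable
  -- measurability of X t w.r.t. ℱ t
  have hXfun : X t = fun ω => ∑ k ∈ Finset.Icc 1 t, σ k ω := by
    funext ω; exact hX t ω
  have hXm' : StronglyMeasurable[ℱ t] (X t) := by
    rw [hXfun]
    exact Finset.stronglyMeasurable_fun_sum _ fun k hk =>
      ((hadapted k).mono (ℱ.mono (Finset.mem_Icc.mp hk).2) le_rfl).stronglyMeasurable
  have hXm : StronglyMeasurable (X t) := hXm'.mono hm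
  -- bounds on X t
  have hXb : ∀ ω, |(X t ω).1| ≤ t ∧ |(X t ω).2| ≤ t := by
    intro ω
    rw [hX]
    constructor
    · rw [Prod.fst_sum]
      calc |∑ k ∈ Finset.Icc 1 t, (σ k ω).1| ≤ ∑ k ∈ Finset.Icc 1 t, |(σ k ω).1| :=
            Finset.abs_sum_le_sum_abs _ _
        _ ≤ ∑ k ∈ Finset.Icc 1 t, 1 :=
            Finset.sum_le_sum fun k hk => (hσb k (Finset.mem_Icc.mp hk).1 ω).1
        _ = t := by simp
    · rw [Prod.snd_sum]
      calc |∑ k ∈ Finset.Icc 1 t, (σ k ω).2| ≤ ∑ k ∈ Finset.Icc 1 t, |(σ k ω).2| :=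
            Finset.abs_sum_le_sum_abs _ _
        _ ≤ ∑ k ∈ Finset.Icc 1 t, 1 :=
            Finset.sum_le_sum fun k hk => (hσb k (Finset.mem_Icc.mp hk).1 ω).2
        _ = t := by simp
  -- integrability helper
  have hint : ∀ {f : Ω → ℝ} (C : ℝ), StronglyMeasurable f → (∀ ω, |f ω| ≤ C) →
      Integrable f μ := by
    intro f C hfm hfb
    exact (integrable_const C).mono' hfm.aestronglyMeasurable
      (Eventually.of_forall fun ω => by simpa [Real.norm_eq_abs] using hfb ω)
  -- component measurability
  have hX1m' : StronglyMeasurable[ℱ t] fun ω => (X t ω).1 :=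
    continuous_fst.comp_stronglyMeasurable hXm'
  have hX2m' : StronglyMeasurable[ℱ t] fun ω => (X t ω).2 :=
    continuous_snd.comp_stronglyMeasurable hXm'
  have hX1m : StronglyMeasurable fun ω => (X t ω).1 := hX1m'.mono hm
  have hX2m : StronglyMeasurable fun ω => (X t ω).2 := hX2m'.mono hm
  have hσ1m : StronglyMeasurable fun ω => (σ (t + 1) ω).1 :=
    continuous_fst.comp_stronglyMeasurable (hσm (t + 1))
  have hσ2m : StronglyMeasurable fun ω => (σ (t + 1) ω).2 :=
    continuous_snd.comp_stronglyMeasurable (hσm (t + 1))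
  have ht1 : (1 : ℕ) ≤ t + 1 := by omega
  -- integrability facts
  have hσ1i : Integrable (fun ω => (σ (t + 1) ω).1) μ :=
    hint 1 hσ1m fun ω => (hσb (t + 1) ht1 ω).1
  have hσ2i : Integrable (fun ω => (σ (t + 1) ω).2) μ :=
    hint 1 hσ2m fun ω => (hσb (t + 1) ht1 ω).2
  have hσi : Integrable (σ (t + 1)) μ := by
    refine (integrable_const (1 : ℝ)).mono' (hσm (t + 1)).aestronglyMeasurable
      (Eventually.of_forall fun ω => ?_)
    rw [Prod.norm_def]
    exact max_le (by simpa [Real.norm_eq_abs] using (hσb (t + 1) ht1 ω).1)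
      (by simpa [Real.norm_eq_abs] using (hσb (t + 1) ht1 ω).2)
  have hnsqX_i : Integrable (fun ω => nsq2 (X t ω)) μ := by
    refine hint (2 * (t : ℝ) ^ 2) ((hX1m.pow 2).add (hX2m.pow 2)) fun ω => ?_
    obtain ⟨h1, h2⟩ := hXb ω
    rw [abs_of_nonneg (by unfold nsq2; positivity)]
    have e1 := sq_abs (X t ω).1
    have e2 := sq_abs (X t ω).2
    have a1 := abs_nonneg (X t ω).1
    have a2 := abs_nonneg (X t ω).2
    unfold nsq2
    nlinarith
  have hnsqσ_i : Integrable (fun ω => nsq2 (σ (t + 1) ω)) μ := by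
    refine hint 2 ((hσ1m.pow 2).add (hσ2m.pow 2)) fun ω => ?_
    obtain ⟨h1, h2⟩ := hσb (t + 1) ht1 ω
    rw [abs_of_nonneg (by unfold nsq2; positivity)]
    have e1 := sq_abs (σ (t + 1) ω).1
    have e2 := sq_abs (σ (t + 1) ω).2
    have a1 := abs_nonneg (σ (t + 1) ω).1
    have a2 := abs_nonneg (σ (t + 1) ω).2
    unfold nsq2
    nlinarith
  have hp1i : Integrable (fun ω => (X t ω).1 * (σ (t + 1) ω).1) μ := by
    refine hint (t : ℝ) (hX1m.mul hσ1m) fun ω => ?_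
    rw [abs_mul]
    calc |(X t ω).1| * |(σ (t + 1) ω).1| ≤ (t : ℝ) * 1 :=
          mul_le_mul (hXb ω).1 (hσb (t + 1) ht1 ω).1 (abs_nonneg _) (Nat.cast_nonneg t)
      _ = t := mul_one _
  have hp2i : Integrable (fun ω => (X t ω).2 * (σ (t + 1) ω).2) μ := by
    refine hint (t : ℝ) (hX2m.mul hσ2m) fun ω => ?_
    rw [abs_mul]
    calc |(X t ω).2| * |(σ (t + 1) ω).2| ≤ (t : ℝ) * 1 :=
          mul_le_mul (hXb ω).2 (hσb (t + 1) ht1 ω).2 (abs_nonneg _) (Nat.cast_nonneg t)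
      _ = t := mul_one _
  have hdoti : Integrable (fun ω => dot2 (X t ω) (σ (t + 1) ω)) μ := hp1i.add hp2i
  -- pointwise expansion
  have hexp : ∀ ω, nsq2 (X (t + 1) ω)
      = nsq2 (X t ω) + 2 * dot2 (X t ω) (σ (t + 1) ω) + nsq2 (σ (t + 1) ω) := by
    intro ω
    have hs : X (t + 1) ω = X t ω + σ (t + 1) ω := by
      rw [hX, hX, Finset.sum_Icc_succ_top ht1]
    rw [hs]
    simp only [nsq2, dot2, Prod.fst_add, Prod.snd_add]
    ring
  -- the cross term
  have hYi : Integrable (μ[σ (t + 1)|ℱ t]) μ := integrable_condExp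
  have hq1i : Integrable (fun ω => (X t ω).1 * ((μ[σ (t + 1)|ℱ t]) ω).1) μ :=
    hYi.fst.bdd_mul hX1m.aestronglyMeasurable
      (c := t) (Eventually.of_forall fun ω => by simpa [Real.norm_eq_abs] using (hXb ω).1)
  have hq2i : Integrable (fun ω => (X t ω).2 * ((μ[σ (t + 1)|ℱ t]) ω).2) μ :=
    hYi.snd.bdd_mul hX2m.aestronglyMeasurable
      (c := t) (Eventually.of_forall fun ω => by simpa [Real.norm_eq_abs] using (hXb ω).2)
  have h1 : ∫ ω, (X t ω).1 * (σ (t + 1) ω).1 ∂μ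
      = ∫ ω, (X t ω).1 * ((μ[σ (t + 1)|ℱ t]) ω).1 ∂μ := by
    rw [← integral_condExp hm (f := fun ω => (X t ω).1 * (σ (t + 1) ω).1)]
    refine integral_congr_ae ?_
    have hmul : μ[(fun ω => (X t ω).1) * (fun ω => (σ (t + 1) ω).1)|ℱ t]
        =ᵐ[μ] (fun ω => (X t ω).1) * μ[fun ω => (σ (t + 1) ω).1|ℱ t] :=
      condExp_mul_of_stronglyMeasurable_left hX1m' hp1i hσ1i
    filter_upwards [hmul, condexp_fst_aux μ hm (σ (t + 1)) hσi] with ω h hf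
    exact h.trans (by simp only [Pi.mul_apply]; rw [hf])
  have h2 : ∫ ω, (X t ω).2 * (σ (t + 1) ω).2 ∂μ
      = ∫ ω, (X t ω).2 * ((μ[σ (t + 1)|ℱ t]) ω).2 ∂μ := by
    rw [← integral_condExp hm (f := fun ω => (X t ω).2 * (σ (t + 1) ω).2)]
    refine integral_congr_ae ?_
    have hmul : μ[(fun ω => (X t ω).2) * (fun ω => (σ (t + 1) ω).2)|ℱ t]
        =ᵐ[μ] (fun ω => (X t ω).2) * μ[fun ω => (σ (t + 1) ω).2|ℱ t] :=
      condExp_mul_of_stronglyMeasurable_left hX2m' hp2i hσ2i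
    filter_upwards [hmul, condexp_snd_aux μ hm (σ (t + 1)) hσi] with ω h hf
    exact h.trans (by simp only [Pi.mul_apply]; rw [hf])
  have hcross : ∫ ω, dot2 (X t ω) (σ (t + 1) ω) ∂μ
      = γ / t * ∫ ω, nsq2 (X t ω) ∂μ := by
    calc ∫ ω, dot2 (X t ω) (σ (t + 1) ω) ∂μ
        = ∫ ω, ((X t ω).1 * (σ (t + 1) ω).1 + (X t ω).2 * (σ (t + 1) ω).2) ∂μ := rfl
      _ = (∫ ω, (X t ω).1 * (σ (t + 1) ω).1 ∂μ)
          + ∫ ω, (X t ω).2 * (σ (t + 1) ω).2 ∂μ := integral_add hp1i hp2i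
      _ = (∫ ω, (X t ω).1 * ((μ[σ (t + 1)|ℱ t]) ω).1 ∂μ)
          + ∫ ω, (X t ω).2 * ((μ[σ (t + 1)|ℱ t]) ω).2 ∂μ := by rw [h1, h2]
      _ = ∫ ω, dot2 (X t ω) ((μ[σ (t + 1)|ℱ t]) ω) ∂μ := (integral_add hq1i hq2i).symm
      _ = ∫ ω, γ / t * nsq2 (X t ω) ∂μ := by
          refine integral_congr_ae ?_
          filter_upwards [hcond t ht] with ω hω
          rw [hω]
          simp only [dot2, rotA, nsq2, Prod.smul_fst, Prod.smul_snd, Prod.fst_add,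
            Prod.snd_add, smul_eq_mul]
          ring
      _ = γ / t * ∫ ω, nsq2 (X t ω) ∂μ := integral_const_mul _ _
  -- put everything together
  have hmain : ∫ ω, nsq2 (X (t + 1) ω) ∂μ
      = (∫ ω, nsq2 (X t ω) ∂μ) + 2 * (∫ ω, dot2 (X t ω) (σ (t + 1) ω) ∂μ)
        + ∫ ω, nsq2 (σ (t + 1) ω) ∂μ := by
    simp only [hexp]
    have eA : Integrable (fun ω => nsq2 (X t ω) + 2 * dot2 (X t ω) (σ (t + 1) ω)) μ :=
      hnsqX_i.add (hdoti.const_mul 2)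
    calc ∫ ω, (nsq2 (X t ω) + 2 * dot2 (X t ω) (σ (t + 1) ω) + nsq2 (σ (t + 1) ω)) ∂μ
        = (∫ ω, (nsq2 (X t ω) + 2 * dot2 (X t ω) (σ (t + 1) ω)) ∂μ)
          + ∫ ω, nsq2 (σ (t + 1) ω) ∂μ := integral_add eA hnsqσ_i
      _ = (∫ ω, nsq2 (X t ω) ∂μ) + (∫ ω, 2 * dot2 (X t ω) (σ (t + 1) ω) ∂μ)
          + ∫ ω, nsq2 (σ (t + 1) ω) ∂μ := by
          rw [integral_add hnsqX_i (hdoti.const_mul 2)]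
      _ = (∫ ω, nsq2 (X t ω) ∂μ) + 2 * (∫ ω, dot2 (X t ω) (σ (t + 1) ω) ∂μ)
          + ∫ ω, nsq2 (σ (t + 1) ω) ∂μ := by
          rw [integral_const_mul]
  rw [hmain, hcross]
  ring
end
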